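/- Let (𝒮, d_𝒮) and (𝒜, d_𝒜) be Polish metric spaces, 𝒯 a Markov transition kernel that is (L_𝒮, L_𝒜)-Lipschitz in the 2-Wasserstein sense, and π a K_π-Lipschitz policy. Then for all s, s' ∈ 𝒮, the induced kernels satisfy the pointwise bound W₂(P^π(s,·), P^π(s',·)) ≤ (L_𝒮 + L_𝒜 K_π) · d_𝒮(s, s'). -/

import Mathlib

open MeasureTheory ENNReal NNReal

/-- The squared 2-Wasserstein distance between two measures, defined as the infimum,
over all couplings `γ` of `(μ, ν)`, of the integral of the squared distance. -/
noncomputable def W2sq {X : Type*} [MeasurableSpace X] [PseudoEMetricSpace X]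
    (μ ν : Measure X) : ℝ≥0∞ :=
  ⨅ γ ∈ {γ : Measure (X × X) | γ.fst = μ ∧ γ.snd = ν}, ∫⁻ p, edist p.1 p.2 ^ 2 ∂γ

/-- The 2-Wasserstein distance. -/
noncomputable def W2 {X : Type*} [MeasurableSpace X] [PseudoEMetricSpace X]
    (μ ν : Measure X) : ℝ≥0∞ :=
  W2sq μ ν ^ (1 / 2 : ℝ)

noncomputable section

/-- square root on ℝ≥0∞ -/
def SR (x : ℝ≥0∞) : ℝ≥0∞ := x ^ (1/2 : ℝ)

lemma SR_sq (x : ℝ≥0∞) : SR (x ^ (2:ℕ)) = x := by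
  rw [SR, ← ENNReal.rpow_natCast, ← ENNReal.rpow_mul]; norm_num

lemma sq_SR (x : ℝ≥0∞) : (SR x) ^ (2:ℕ) = x := by
  rw [SR, ← ENNReal.rpow_natCast, ← ENNReal.rpow_mul]; norm_num

lemma SR_mono {a b : ℝ≥0∞} (h : a ≤ b) : SR a ≤ SR b :=
  ENNReal.rpow_le_rpow h (by norm_num)

lemma SR_add_le (a b : ℝ≥0∞) : SR (a + b) ≤ SR a + SR b := by
  have h : a + b ≤ (SR a + SR b) ^ (2:ℕ) := by
    have := add_sq (SR a) (SR b)
    rw [add_sq]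
    calc a + b = (SR a)^2 + (SR b)^2 := by rw [sq_SR, sq_SR]
    _ ≤ (SR a)^2 + 2 * SR a * SR b + (SR b)^2 := by
        apply add_le_add_left; exact le_add_of_nonneg_right (zero_le)
  calc SR (a+b) ≤ SR ((SR a + SR b)^(2:ℕ)) := SR_mono h
  _ = SR a + SR b := SR_sq _

lemma sq_mono {a b : ℝ≥0∞} (h : a ≤ b) : a^(2:ℕ) ≤ b^(2:ℕ) := pow_le_pow_left' h 2

lemma sq_add_le (a b : ℝ≥0∞) : (a + b)^(2:ℕ) ≤ 4 * a^(2:ℕ) + 4 * b^(2:ℕ) := by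
  have h : a + b ≤ 2 * max a b := by
    rcases le_total a b with h | h
    · calc a + b ≤ b + b := add_le_add_left h b
      _ = 2 * b := (two_mul b).symm
      _ ≤ 2 * max a b := mul_le_mul_right (le_max_right a b) 2
    · calc a + b ≤ a + a := add_le_add_right h a
      _ = 2 * a := (two_mul a).symm
      _ ≤ 2 * max a b := mul_le_mul_right (le_max_left a b) 2
  calc (a+b)^(2:ℕ) ≤ (2 * max a b)^(2:ℕ) := sq_mono h
  _ = 4 * (max a b)^(2:ℕ) := by rw [mul_pow]; norm_num
  _ ≤ 4 * (a^(2:ℕ) + b^(2:ℕ)) := by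
      apply mul_le_mul_right
      rcases le_total a b with h | h
      · rw [max_eq_right h]; exact le_add_self
      · rw [max_eq_left h]; exact le_self_add
  _ = 4 * a^(2:ℕ) + 4 * b^(2:ℕ) := by ring


section Selector

variable {S : Type*} [PseudoEMetricSpace S]

/-- interpretation of a rational finitely-supported plan as an ENNReal matrix -/
def planM (p : (ℕ × ℕ) →₀ ℚ) : ℕ × ℕ → ℝ≥0∞ := fun ij => ENNReal.ofReal (p ij)

def rowM (p : (ℕ × ℕ) →₀ ℚ) : ℕ → ℝ≥0∞ := fun i => ∑' j, planM p (i, j)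

def colM (p : (ℕ × ℕ) →₀ ℚ) : ℕ → ℝ≥0∞ := fun j => ∑' i, planM p (i, j)

def massM (p : (ℕ × ℕ) →₀ ℚ) : ℝ≥0∞ := ∑' ij : ℕ × ℕ, planM p ij

/-- the completed coupling matrix associated to a plan: the plan itself plus the
normalized product of the leftovers -/
def eM (p : (ℕ × ℕ) →₀ ℚ) (c d : ℕ → ℝ≥0∞) : ℕ × ℕ → ℝ≥0∞ :=
  fun ij => planM p ij +
    (1 - massM p)⁻¹ * ((c ij.1 - rowM p ij.1) * (d ij.2 - colM p ij.2))

def feasM (p : (ℕ × ℕ) →₀ ℚ) (c d : ℕ → ℝ≥0∞) : Prop :=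
  (∀ i, rowM p i ≤ c i) ∧ (∀ j, colM p j ≤ d j)

def costM (x : ℕ → S) (e : ℕ × ℕ → ℝ≥0∞) : ℝ≥0∞ :=
  ∑' ij : ℕ × ℕ, e ij * edist (x ij.1) (x ij.2) ^ (2:ℕ)

lemma massM_eq_tsum_rowM (p : (ℕ × ℕ) →₀ ℚ) : massM p = ∑' i, rowM p i := by
  rw [massM, ENNReal.tsum_prod']; rfl

lemma massM_eq_tsum_colM (p : (ℕ × ℕ) →₀ ℚ) : massM p = ∑' j, colM p j := by
  rw [massM, ENNReal.tsum_prod', ENNReal.tsum_comm]; rfl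

lemma massM_ne_top (p : (ℕ × ℕ) →₀ ℚ) : massM p ≠ ⊤ := by
  have h : massM p = ∑ ij ∈ p.support, planM p ij := by
    apply tsum_eq_sum
    intro ij hij
    simp only [planM]
    rw [Finsupp.notMem_support_iff.mp hij]
    simp
  rw [h]
  exact (ENNReal.sum_lt_top.mpr (fun ij _ => ENNReal.ofReal_lt_top)).ne

lemma planM_zero : planM 0 = 0 := by
  funext ij; simp [planM]

/-- leftover sums: if the plan is feasible and c is a probability vector, the sum of
the leftover row masses is 1 - massM p. -/
lemma tsum_leftover_row (p : (ℕ × ℕ) →₀ ℚ) (c : ℕ → ℝ≥0∞) (hc : (∑' i, c i) = 1)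
    (hfeas : ∀ i, rowM p i ≤ c i) :
    (∑' i, (c i - rowM p i)) = 1 - massM p := by
  rw [ENNReal.tsum_sub (by rw [← massM_eq_tsum_rowM]; exact massM_ne_top p) hfeas, hc,
    massM_eq_tsum_rowM]

lemma tsum_leftover_col (p : (ℕ × ℕ) →₀ ℚ) (d : ℕ → ℝ≥0∞) (hd : (∑' j, d j) = 1)
    (hfeas : ∀ j, colM p j ≤ d j) :
    (∑' j, (d j - colM p j)) = 1 - massM p := by
  rw [ENNReal.tsum_sub (by rw [← massM_eq_tsum_colM]; exact massM_ne_top p) hfeas, hd,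
    massM_eq_tsum_colM]

/-- row sums of the completed matrix -/
lemma eM_row (p : (ℕ × ℕ) →₀ ℚ) (c d : ℕ → ℝ≥0∞) (hc : (∑' i, c i) = 1)
    (hd : (∑' j, d j) = 1) (hfeas : feasM p c d) (i : ℕ) :
    (∑' j, eM p c d (i, j)) = c i := by
  have hmle : massM p ≤ 1 := by
    rw [massM_eq_tsum_rowM, ← hc]; exact Summable.tsum_le_tsum hfeas.1 ENNReal.summable ENNReal.summable
  have key : (∑' j, eM p c d (i, j)) =
      rowM p i + ((1 - massM p)⁻¹ * (c i - rowM p i)) * (1 - massM p) := by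
    have h1 : (∑' j, eM p c d (i, j)) = ∑' j, (planM p (i, j) +
        ((1 - massM p)⁻¹ * (c i - rowM p i)) * (d j - colM p j)) := by
      congr 1; funext j; simp only [eM]; ring
    rw [h1, ENNReal.tsum_add, ENNReal.tsum_mul_left, tsum_leftover_col p d hd hfeas.2]
    rfl
  rw [key]
  rcases eq_or_ne (1 - massM p) 0 with ht | ht
  · have hz : ∀ i', c i' - rowM p i' = 0 := by
      have := tsum_leftover_row p c hc hfeas.1
      rw [ht] at this
      exact fun i' => (ENNReal.tsum_eq_zero.mp this) i'
    have hle : c i ≤ rowM p i := tsub_eq_zero_iff_le.mp (hz i)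
    rw [ht, mul_zero, add_zero]
    exact le_antisymm (hfeas.1 i) hle
  · have htop : 1 - massM p ≠ ⊤ := by
      exact ((tsub_le_self).trans_lt (by norm_num : (1:ℝ≥0∞) < ⊤)).ne
    rw [mul_comm ((1 - massM p)⁻¹) _, mul_assoc, ENNReal.inv_mul_cancel ht htop, mul_one]
    exact add_tsub_cancel_of_le (hfeas.1 i)

/-- column sums of the completed matrix -/
lemma eM_col (p : (ℕ × ℕ) →₀ ℚ) (c d : ℕ → ℝ≥0∞) (hc : (∑' i, c i) = 1)
    (hd : (∑' j, d j) = 1) (hfeas : feasM p c d) (j : ℕ) :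
    (∑' i, eM p c d (i, j)) = d j := by
  have key : (∑' i, eM p c d (i, j)) =
      colM p j + ((1 - massM p)⁻¹ * (d j - colM p j)) * (1 - massM p) := by
    have h1 : (∑' i, eM p c d (i, j)) = ∑' i, (planM p (i, j) +
        ((1 - massM p)⁻¹ * (d j - colM p j)) * (c i - rowM p i)) := by
      congr 1; funext i; simp only [eM]; ring
    rw [h1, ENNReal.tsum_add, ENNReal.tsum_mul_left, tsum_leftover_row p c hc hfeas.1]
    rfl
  rw [key]
  rcases eq_or_ne (1 - massM p) 0 with ht | ht
  · have hz : ∀ j', d j' - colM p j' = 0 := by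
      have := tsum_leftover_col p d hd hfeas.2
      rw [ht] at this
      exact fun j' => (ENNReal.tsum_eq_zero.mp this) j'
    have hle : d j ≤ colM p j := tsub_eq_zero_iff_le.mp (hz j)
    rw [ht, mul_zero, add_zero]
    exact le_antisymm (hfeas.2 j) hle
  · have htop : 1 - massM p ≠ ⊤ := by
      exact ((tsub_le_self).trans_lt (by norm_num : (1:ℝ≥0∞) < ⊤)).ne
    rw [mul_comm ((1 - massM p)⁻¹) _, mul_assoc, ENNReal.inv_mul_cancel ht htop, mul_one]
    exact add_tsub_cancel_of_le (hfeas.2 j)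

lemma round_exists (g δ₀ : ℝ≥0∞) (hg : g ≠ ⊤) (hδ : δ₀ ≠ 0) :
    ∃ q : ℚ, ENNReal.ofReal q ≤ g ∧ g ≤ ENNReal.ofReal q + δ₀ := by
  rcases eq_or_ne g 0 with h0 | h0
  · exact ⟨0, by simp [h0], by simp [h0]⟩
  rcases eq_or_ne δ₀ ⊤ with ht | ht
  · exact ⟨0, by simp, by simp [ht]⟩
  have hgr : 0 < g.toReal := ENNReal.toReal_pos h0 hg
  have hdr : 0 < δ₀.toReal := ENNReal.toReal_pos hδ ht
  obtain ⟨q, hq1, hq2⟩ := exists_rat_btwn (by linarith : g.toReal - δ₀.toReal < g.toReal)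
  refine ⟨q, ?_, ?_⟩
  · calc ENNReal.ofReal q ≤ ENNReal.ofReal g.toReal := ENNReal.ofReal_le_ofReal hq2.le
    _ = g := ENNReal.ofReal_toReal hg
  · calc g = ENNReal.ofReal g.toReal := (ENNReal.ofReal_toReal hg).symm
    _ ≤ ENNReal.ofReal ((q : ℝ) + δ₀.toReal) := ENNReal.ofReal_le_ofReal (by linarith)
    _ ≤ ENNReal.ofReal q + ENNReal.ofReal δ₀.toReal := ENNReal.ofReal_add_le
    _ ≤ ENNReal.ofReal q + δ₀ := add_le_add_right ENNReal.ofReal_toReal_le _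

/-- The key approximation lemma: any coupling matrix `G` of `(c, d)` can be approximated,
up to `16 δ` in transport cost, by the completion of a finitely supported rational plan. -/
lemma exists_plan_approx (x : ℕ → S) {c d : ℕ → ℝ≥0∞} (hc : (∑' i, c i) = 1)
    (hd : (∑' j, d j) = 1) (G : ℕ × ℕ → ℝ≥0∞)
    (hGr : ∀ i, (∑' j, G (i, j)) = c i) (hGc : ∀ j, (∑' i, G (i, j)) = d j)
    (hmc : (∑' i, c i * edist (x i) (x 0) ^ (2:ℕ)) ≠ ⊤)
    (hmd : (∑' j, d j * edist (x j) (x 0) ^ (2:ℕ)) ≠ ⊤)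
    {δ : ℝ≥0∞} (hδ0 : δ ≠ 0) (hδt : δ ≠ ⊤) :
    ∃ p : (ℕ × ℕ) →₀ ℚ, feasM p c d ∧
      costM x (eM p c d) ≤ costM x G + 16 * δ := by
  classical
  set D : ℕ × ℕ → ℝ≥0∞ := fun w => edist (x w.1) (x w.2) ^ (2:ℕ) with hD
  set D1 : ℕ → ℝ≥0∞ := fun i => edist (x i) (x 0) ^ (2:ℕ) with hD1
  set W : ℝ≥0∞ := costM x G with hW
  rcases eq_or_ne W ⊤ with hWtop | hWtop
  · refine ⟨0, ⟨fun i => ?_, fun j => ?_⟩, ?_⟩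
    · simp [rowM, planM_zero]
    · simp [colM, planM_zero]
    · rw [hWtop]; simp
  -- the auxiliary summable majorant
  set B : ℕ × ℕ → ℝ≥0∞ := fun w => D w + D1 w.1 + D1 w.2 + 1 with hB
  set φ : ℕ × ℕ → ℝ≥0∞ := fun w => G w * B w with hφdef
  have hsumG : (∑' w : ℕ × ℕ, G w) = 1 := by
    rw [ENNReal.tsum_prod']
    calc (∑' i, ∑' j, G (i,j)) = ∑' i, c i := by
          congr 1; funext i; exact hGr i
    _ = 1 := hc
  have hGD1fst : (∑' w : ℕ × ℕ, G w * D1 w.1) = ∑' i, c i * D1 i := by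
    rw [ENNReal.tsum_prod']
    congr 1; funext i
    show (∑' j, G (i, j) * D1 i) = c i * D1 i
    rw [ENNReal.tsum_mul_right, hGr i]
  have hGD1snd : (∑' w : ℕ × ℕ, G w * D1 w.2) = ∑' j, d j * D1 j := by
    rw [ENNReal.tsum_prod']
    rw [ENNReal.tsum_comm]
    congr 1; funext j
    show (∑' i, G (i, j) * D1 j) = d j * D1 j
    rw [ENNReal.tsum_mul_right, hGc j]
  have hφ : (∑' w : ℕ × ℕ, φ w) ≠ ⊤ := by
    have hexp : (∑' w : ℕ × ℕ, φ w) =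
        W + (∑' i, c i * D1 i) + (∑' j, d j * D1 j) + 1 := by
      have h1 : ∀ w : ℕ × ℕ, φ w = G w * D w + G w * D1 w.1 + G w * D1 w.2 + G w * 1 := by
        intro w; simp only [hφdef, hB]; ring
      calc (∑' w : ℕ × ℕ, φ w)
          = ∑' w : ℕ × ℕ, (G w * D w + G w * D1 w.1 + G w * D1 w.2 + G w * 1) := by
            congr 1; funext w; exact h1 w
      _ = W + (∑' i, c i * D1 i) + (∑' j, d j * D1 j) + 1 := by
            rw [ENNReal.tsum_add, ENNReal.tsum_add, ENNReal.tsum_add, hGD1fst, hGD1snd]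
            simp only [mul_one, hsumG]
            rfl
    rw [hexp]
    exact ENNReal.add_ne_top.mpr ⟨ENNReal.add_ne_top.mpr ⟨ENNReal.add_ne_top.mpr
      ⟨hWtop, hmc⟩, hmd⟩, ENNReal.one_ne_top⟩
  -- choose a finite set capturing most of φ
  obtain ⟨Fs, hFs⟩ : ∃ Fs : Finset (ℕ × ℕ), (∑' w : {w : ℕ × ℕ // w ∉ Fs}, φ w) ≤ δ := by
    have h := ENNReal.tendsto_tsum_compl_atTop_zero hφ
    rw [ENNReal.tendsto_nhds_zero] at h
    exact (h δ (pos_iff_ne_zero.mpr hδ0)).exists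
  -- finiteness facts at points with G w ≠ 0
  have hGle1 : ∀ w : ℕ × ℕ, G w ≤ 1 := by
    intro w
    calc G w ≤ ∑' w' : ℕ × ℕ, G w' := ENNReal.le_tsum w
    _ = 1 := hsumG
  have hBfin : ∀ w : ℕ × ℕ, G w ≠ 0 → B w ≠ ⊤ := by
    intro w hGw
    have hDw : D w ≠ ⊤ := by
      intro hDt
      apply hWtop
      have : G w * D w = ⊤ := by rw [hDt]; exact ENNReal.mul_top hGw
      refine top_le_iff.mp ?_
      rw [← this]
      exact ENNReal.le_tsum w
    have hD1w1 : D1 w.1 ≠ ⊤ := by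
      intro hDt
      apply hmc
      have hcw : c w.1 ≠ 0 := by
        intro hc0
        apply hGw
        have : G w ≤ c w.1 := by
          rw [← hGr w.1]
          exact (ENNReal.le_tsum w.2).trans_eq (by rfl)
        rw [hc0] at this; exact le_zero_iff.mp this
      have : c w.1 * D1 w.1 = ⊤ := by rw [hDt]; exact ENNReal.mul_top hcw
      refine top_le_iff.mp ?_
      rw [← this]
      exact ENNReal.le_tsum w.1
    have hD1w2 : D1 w.2 ≠ ⊤ := by
      intro hDt
      apply hmd
      have hdw : d w.2 ≠ 0 := by
        intro hd0
        apply hGw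
        have : G w ≤ d w.2 := by
          rw [← hGc w.2]
          exact (ENNReal.le_tsum w.1).trans_eq (by rfl)
        rw [hd0] at this; exact le_zero_iff.mp this
      have : d w.2 * D1 w.2 = ⊤ := by rw [hDt]; exact ENNReal.mul_top hdw
      refine top_le_iff.mp ?_
      rw [← this]
      exact ENNReal.le_tsum w.2
    simp only [hB, ENNReal.add_eq_top]
    simp [hDw, hD1w1, hD1w2]
  -- rounding
  have hround : ∀ w : ℕ × ℕ, ∃ q : ℚ,
      (w ∈ Fs → (ENNReal.ofReal q ≤ G w ∧
        G w ≤ ENNReal.ofReal q + δ / (Fs.card * B w))) ∧ (w ∉ Fs → q = 0) := by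
    intro w
    by_cases hw : w ∈ Fs
    · rcases eq_or_ne (G w) 0 with hG0 | hG0
      · exact ⟨0, fun _ => ⟨by simp [hG0], by simp [hG0]⟩, fun h => absurd hw h⟩
      · have hcard : (Fs.card : ℝ≥0∞) ≠ 0 := by
          simp only [ne_eq, Nat.cast_eq_zero, Finset.card_eq_zero]
          intro h; rw [h] at hw; exact absurd hw (Finset.notMem_empty w)
        have hδ₀ : δ / (Fs.card * B w) ≠ 0 := by
          apply ENNReal.div_ne_zero.mpr
          refine ⟨hδ0, ?_⟩
          exact ENNReal.mul_ne_top (ENNReal.natCast_ne_top _) (hBfin w hG0)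
        obtain ⟨q, hq1, hq2⟩ := round_exists (G w) _ (fun h => by
          exact (hGle1 w).not_gt (h ▸ ENNReal.one_lt_top) ) hδ₀
        exact ⟨q, fun _ => ⟨hq1, hq2⟩, fun h => absurd hw h⟩
    · exact ⟨0, fun h => absurd h hw, fun _ => rfl⟩
  choose q hq1 hq2 using hround
  set p0 : (ℕ × ℕ) →₀ ℚ := Finsupp.onFinset Fs q (by
    intro w hw
    by_contra hnot
    exact hw (hq2 w hnot)) with hp0
  have hp0app : ∀ w, planM p0 w = ENNReal.ofReal (q w) := fun w => rfl
  have hr_le : ∀ w, planM p0 w ≤ G w := by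
    intro w
    by_cases hw : w ∈ Fs
    · rw [hp0app]; exact ((hq1 w) hw).1
    · rw [hp0app, hq2 w hw]; simp
  have hfeas : feasM p0 c d := by
    constructor
    · intro i
      rw [rowM, ← hGr i]
      exact Summable.tsum_le_tsum (fun j => hr_le (i, j)) ENNReal.summable ENNReal.summable
    · intro j
      rw [colM, ← hGc j]
      exact Summable.tsum_le_tsum (fun i => hr_le (i, j)) ENNReal.summable ENNReal.summable
  refine ⟨p0, hfeas, ?_⟩
  set t : ℝ≥0∞ := 1 - massM p0 with hts
  set K : ℝ≥0∞ := t⁻¹ with hKs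
  set c' : ℕ → ℝ≥0∞ := fun i => c i - rowM p0 i with hc's
  set d' : ℕ → ℝ≥0∞ := fun j => d j - colM p0 j with hd's
  have ht_c : (∑' i, c' i) = t := tsum_leftover_row p0 c hc hfeas.1
  have ht_d : (∑' j, d' j) = t := tsum_leftover_col p0 d hd hfeas.2
  -- split the cost of the completed plan
  have hsplit : costM x (eM p0 c d) =
      (∑' w : ℕ × ℕ, planM p0 w * D w) + K * (∑' w : ℕ × ℕ, (c' w.1 * d' w.2) * D w) := by
    rw [costM, ← ENNReal.tsum_mul_left, ← ENNReal.tsum_add]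
    congr 1; funext w
    simp only [eM, hD, hc's, hd's, hKs, hts]
    ring
  have h1 : (∑' w : ℕ × ℕ, planM p0 w * D w) ≤ W := by
    rw [hW, costM]
    exact Summable.tsum_le_tsum (fun w => mul_le_mul_left (hr_le w) _)
      ENNReal.summable ENNReal.summable
  -- pointwise domination of the cost matrix
  have hDle : ∀ w : ℕ × ℕ, D w ≤ 4 * D1 w.1 + 4 * D1 w.2 := by
    intro w
    have h2 : edist (x 0) (x w.2) ^ (2:ℕ) = D1 w.2 := by
      rw [hD1, edist_comm]
    calc D w ≤ (edist (x w.1) (x 0) + edist (x 0) (x w.2)) ^ (2:ℕ) :=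
          sq_mono (edist_triangle _ _ _)
    _ ≤ 4 * edist (x w.1) (x 0) ^ (2:ℕ) + 4 * edist (x 0) (x w.2) ^ (2:ℕ) := sq_add_le _ _
    _ = 4 * D1 w.1 + 4 * D1 w.2 := by rw [h2]
  have hT2 : (∑' w : ℕ × ℕ, (c' w.1 * d' w.2) * D w) ≤
      4 * ((∑' i, c' i * D1 i) * t) + 4 * (t * (∑' j, d' j * D1 j)) := by
    calc (∑' w : ℕ × ℕ, (c' w.1 * d' w.2) * D w)
        ≤ ∑' w : ℕ × ℕ, (c' w.1 * d' w.2) * (4 * D1 w.1 + 4 * D1 w.2) :=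
          Summable.tsum_le_tsum (fun w => mul_le_mul_right (hDle w) _)
            ENNReal.summable ENNReal.summable
    _ = ∑' i, ∑' j, (4 * (c' i * D1 i) * d' j + 4 * c' i * (d' j * D1 j)) := by
          rw [ENNReal.tsum_prod']
          congr 1; funext i
          congr 1; funext j
          show (c' i * d' j) * (4 * D1 i + 4 * D1 j) = _
          ring
    _ = ∑' i, (4 * (c' i * D1 i) * t + 4 * c' i * (∑' j, d' j * D1 j)) := by
          congr 1; funext i
          rw [ENNReal.tsum_add, ENNReal.tsum_mul_left, ENNReal.tsum_mul_left, ht_d]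
    _ = 4 * ((∑' i, c' i * D1 i) * t) + 4 * (t * (∑' j, d' j * D1 j)) := by
          rw [ENNReal.tsum_add]
          congr 1
          · calc (∑' i, 4 * (c' i * D1 i) * t) = ∑' i, (c' i * D1 i) * (4 * t) := by
                  congr 1; funext i; ring
            _ = (∑' i, c' i * D1 i) * (4 * t) := ENNReal.tsum_mul_right
            _ = 4 * ((∑' i, c' i * D1 i) * t) := by ring
          · calc (∑' i, 4 * c' i * (∑' j, d' j * D1 j))
                = ∑' i, c' i * (4 * (∑' j, d' j * D1 j)) := by congr 1; funext i; ring
            _ = (∑' i, c' i) * (4 * (∑' j, d' j * D1 j)) := ENNReal.tsum_mul_right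
            _ = 4 * (t * (∑' j, d' j * D1 j)) := by rw [ht_c]; ring
  -- the leftover-moment bounds
  have hcard_bound : ∀ w : ℕ × ℕ, w ∈ Fs → G w ≠ 0 →
      (δ / (Fs.card * B w)) * B w ≤ δ / Fs.card := by
    intro w hw hG0
    have hcard : (Fs.card : ℝ≥0∞) ≠ 0 := by
      simp only [ne_eq, Nat.cast_eq_zero, Finset.card_eq_zero]
      intro h; rw [h] at hw; exact absurd hw (Finset.notMem_empty w)
    have hBne : B w ≠ 0 := by
      simp only [hB]
      intro h
      apply @one_ne_zero ℝ≥0∞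
      have h1 : (1:ℝ≥0∞) ≤ D w + D1 w.1 + D1 w.2 + 1 := le_add_self
      rw [h] at h1
      exact le_zero_iff.mp h1
    rw [ENNReal.div_eq_inv_mul, ENNReal.div_eq_inv_mul,
      ENNReal.mul_inv (Or.inl (by exact_mod_cast hcard)) (Or.inl (ENNReal.natCast_ne_top _))]
    calc (Fs.card : ℝ≥0∞)⁻¹ * (B w)⁻¹ * δ * B w
        = ((Fs.card : ℝ≥0∞)⁻¹ * δ) * ((B w)⁻¹ * B w) := by ring
    _ ≤ ((Fs.card : ℝ≥0∞)⁻¹ * δ) * 1 := mul_le_mul_right (ENNReal.inv_mul_le_one _) _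
    _ = (Fs.card : ℝ≥0∞)⁻¹ * δ := mul_one _
  have hGp_fst : (∑' i, c' i * D1 i) ≤ 2 * δ := by
    have step1 : ∀ i, c' i ≤ ∑' j, (G (i, j) - planM p0 (i, j)) := by
      intro i
      apply tsub_le_iff_right.mpr
      rw [← hGr i, rowM, ← ENNReal.tsum_add]
      refine Summable.tsum_le_tsum (fun j => ?_) ENNReal.summable ENNReal.summable
      exact le_of_eq (tsub_add_cancel_of_le (hr_le (i, j))).symm
    have step2 : (∑' i, c' i * D1 i) ≤ ∑' w : ℕ × ℕ, (G w - planM p0 w) * D1 w.1 := by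
      rw [ENNReal.tsum_prod']
      refine Summable.tsum_le_tsum (fun i => ?_) ENNReal.summable ENNReal.summable
      calc c' i * D1 i ≤ (∑' j, (G (i, j) - planM p0 (i, j))) * D1 i :=
            mul_le_mul_left (step1 i) _
      _ = ∑' j, (G (i, j) - planM p0 (i, j)) * D1 i := (ENNReal.tsum_mul_right).symm
    have step3 : ∀ w : ℕ × ℕ, (G w - planM p0 w) * D1 w.1 ≤
        (if w ∈ Fs then δ / Fs.card else 0) +
          Set.indicator ((↑Fs : Set (ℕ × ℕ))ᶜ) φ w := by
      intro w
      by_cases hw : w ∈ Fs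
      · rw [if_pos hw, Set.indicator_of_notMem (by simp [hw]), add_zero]
        rcases eq_or_ne (G w) 0 with hG0 | hG0
        · rw [hG0, zero_tsub, zero_mul]; exact zero_le
        · have hup : G w - planM p0 w ≤ δ / (Fs.card * B w) := by
            apply tsub_le_iff_right.mpr
            rw [add_comm]
            exact ((hq1 w) hw).2
          have hD1B : D1 w.1 ≤ B w := by
            rw [hB]
            calc D1 w.1 ≤ D w + D1 w.1 := le_add_self
            _ ≤ D w + D1 w.1 + D1 w.2 := le_add_of_le_of_nonneg le_rfl (zero_le)
            _ ≤ D w + D1 w.1 + D1 w.2 + 1 := le_add_of_le_of_nonneg le_rfl (zero_le)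
          calc (G w - planM p0 w) * D1 w.1 ≤ (δ / (Fs.card * B w)) * B w :=
                mul_le_mul' hup hD1B
          _ ≤ δ / Fs.card := hcard_bound w hw hG0
      · rw [if_neg hw, Set.indicator_of_mem (by simp [hw]), zero_add]
        have hp0w : planM p0 w = 0 := by rw [hp0app, hq2 w hw]; simp
        rw [hp0w, tsub_zero]
        apply mul_le_mul_right
        rw [hB]
        calc D1 w.1 ≤ D w + D1 w.1 := le_add_self
        _ ≤ D w + D1 w.1 + D1 w.2 := le_add_of_le_of_nonneg le_rfl (zero_le)
        _ ≤ D w + D1 w.1 + D1 w.2 + 1 := le_add_of_le_of_nonneg le_rfl (zero_le)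
    have hsum_ite : (∑' w : ℕ × ℕ, (if w ∈ Fs then δ / Fs.card else 0)) ≤ δ := by
      rw [tsum_eq_sum (s := Fs) (fun w hw => if_neg hw)]
      rw [Finset.sum_congr rfl (fun w hw => if_pos hw), Finset.sum_const, nsmul_eq_mul]
      rw [ENNReal.div_eq_inv_mul]
      calc (Fs.card : ℝ≥0∞) * ((Fs.card : ℝ≥0∞)⁻¹ * δ)
          = ((Fs.card : ℝ≥0∞) * (Fs.card : ℝ≥0∞)⁻¹) * δ := by ring
      _ ≤ 1 * δ := mul_le_mul_left (ENNReal.mul_inv_le_one _) _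
      _ = δ := one_mul δ
    have hsum_ind : (∑' w : ℕ × ℕ, Set.indicator ((↑Fs : Set (ℕ × ℕ))ᶜ) φ w) ≤ δ := by
      rw [← tsum_subtype]
      have he := Equiv.tsum_eq (Equiv.subtypeEquivRight
        (p := fun w : ℕ × ℕ => w ∉ Fs) (q := fun w : ℕ × ℕ => w ∈ ((↑Fs : Set (ℕ × ℕ))ᶜ))
        (fun w => by simp)) (fun w : ↥((↑Fs : Set (ℕ × ℕ))ᶜ) => φ ↑w)
      rw [← he]
      exact hFs
    calc (∑' i, c' i * D1 i) ≤ ∑' w : ℕ × ℕ, (G w - planM p0 w) * D1 w.1 := step2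
    _ ≤ ∑' w : ℕ × ℕ, ((if w ∈ Fs then δ / Fs.card else 0) +
          Set.indicator ((↑Fs : Set (ℕ × ℕ))ᶜ) φ w) :=
          Summable.tsum_le_tsum step3 ENNReal.summable ENNReal.summable
    _ = (∑' w : ℕ × ℕ, (if w ∈ Fs then δ / Fs.card else 0)) +
          (∑' w : ℕ × ℕ, Set.indicator ((↑Fs : Set (ℕ × ℕ))ᶜ) φ w) := ENNReal.tsum_add
    _ ≤ δ + δ := add_le_add hsum_ite hsum_ind
    _ = 2 * δ := (two_mul δ).symm
  have hGp_snd : (∑' j, d' j * D1 j) ≤ 2 * δ := by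
    have step1 : ∀ j, d' j ≤ ∑' i, (G (i, j) - planM p0 (i, j)) := by
      intro j
      apply tsub_le_iff_right.mpr
      rw [← hGc j, colM, ← ENNReal.tsum_add]
      refine Summable.tsum_le_tsum (fun i => ?_) ENNReal.summable ENNReal.summable
      exact le_of_eq (tsub_add_cancel_of_le (hr_le (i, j))).symm
    have step2 : (∑' j, d' j * D1 j) ≤ ∑' w : ℕ × ℕ, (G w - planM p0 w) * D1 w.2 := by
      rw [ENNReal.tsum_prod', ENNReal.tsum_comm]
      refine Summable.tsum_le_tsum (fun j => ?_) ENNReal.summable ENNReal.summable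
      calc d' j * D1 j ≤ (∑' i, (G (i, j) - planM p0 (i, j))) * D1 j :=
            mul_le_mul_left (step1 j) _
      _ = ∑' i, (G (i, j) - planM p0 (i, j)) * D1 j := (ENNReal.tsum_mul_right).symm
    have step3 : ∀ w : ℕ × ℕ, (G w - planM p0 w) * D1 w.2 ≤
        (if w ∈ Fs then δ / Fs.card else 0) +
          Set.indicator ((↑Fs : Set (ℕ × ℕ))ᶜ) φ w := by
      intro w
      by_cases hw : w ∈ Fs
      · rw [if_pos hw, Set.indicator_of_notMem (by simp [hw]), add_zero]
        rcases eq_or_ne (G w) 0 with hG0 | hG0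
        · rw [hG0, zero_tsub, zero_mul]; exact zero_le
        · have hup : G w - planM p0 w ≤ δ / (Fs.card * B w) := by
            apply tsub_le_iff_right.mpr
            rw [add_comm]
            exact ((hq1 w) hw).2
          have hD1B : D1 w.2 ≤ B w := by
            rw [hB]
            calc D1 w.2 ≤ (D w + D1 w.1) + D1 w.2 := le_add_self
            _ ≤ D w + D1 w.1 + D1 w.2 + 1 := le_add_of_le_of_nonneg le_rfl (zero_le)
          calc (G w - planM p0 w) * D1 w.2 ≤ (δ / (Fs.card * B w)) * B w :=
                mul_le_mul' hup hD1B
          _ ≤ δ / Fs.card := hcard_bound w hw hG0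
      · rw [if_neg hw, Set.indicator_of_mem (by simp [hw]), zero_add]
        have hp0w : planM p0 w = 0 := by rw [hp0app, hq2 w hw]; simp
        rw [hp0w, tsub_zero]
        apply mul_le_mul_right
        rw [hB]
        calc D1 w.2 ≤ (D w + D1 w.1) + D1 w.2 := le_add_self
        _ ≤ D w + D1 w.1 + D1 w.2 + 1 := le_add_of_le_of_nonneg le_rfl (zero_le)
    have hsum_ite : (∑' w : ℕ × ℕ, (if w ∈ Fs then δ / Fs.card else 0)) ≤ δ := by
      rw [tsum_eq_sum (s := Fs) (fun w hw => if_neg hw)]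
      rw [Finset.sum_congr rfl (fun w hw => if_pos hw), Finset.sum_const, nsmul_eq_mul]
      rw [ENNReal.div_eq_inv_mul]
      calc (Fs.card : ℝ≥0∞) * ((Fs.card : ℝ≥0∞)⁻¹ * δ)
          = ((Fs.card : ℝ≥0∞) * (Fs.card : ℝ≥0∞)⁻¹) * δ := by ring
      _ ≤ 1 * δ := mul_le_mul_left (ENNReal.mul_inv_le_one _) _
      _ = δ := one_mul δ
    have hsum_ind : (∑' w : ℕ × ℕ, Set.indicator ((↑Fs : Set (ℕ × ℕ))ᶜ) φ w) ≤ δ := by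
      rw [← tsum_subtype]
      have he := Equiv.tsum_eq (Equiv.subtypeEquivRight
        (p := fun w : ℕ × ℕ => w ∉ Fs) (q := fun w : ℕ × ℕ => w ∈ ((↑Fs : Set (ℕ × ℕ))ᶜ))
        (fun w => by simp)) (fun w : ↥((↑Fs : Set (ℕ × ℕ))ᶜ) => φ ↑w)
      rw [← he]
      exact hFs
    calc (∑' j, d' j * D1 j) ≤ ∑' w : ℕ × ℕ, (G w - planM p0 w) * D1 w.2 := step2
    _ ≤ ∑' w : ℕ × ℕ, ((if w ∈ Fs then δ / Fs.card else 0) +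
          Set.indicator ((↑Fs : Set (ℕ × ℕ))ᶜ) φ w) :=
          Summable.tsum_le_tsum step3 ENNReal.summable ENNReal.summable
    _ = (∑' w : ℕ × ℕ, (if w ∈ Fs then δ / Fs.card else 0)) +
          (∑' w : ℕ × ℕ, Set.indicator ((↑Fs : Set (ℕ × ℕ))ᶜ) φ w) := ENNReal.tsum_add
    _ ≤ δ + δ := add_le_add hsum_ite hsum_ind
    _ = 2 * δ := (two_mul δ).symm
  -- put everything together
  have hKT : K * (∑' w : ℕ × ℕ, (c' w.1 * d' w.2) * D w) ≤ 16 * δ := by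
    calc K * (∑' w : ℕ × ℕ, (c' w.1 * d' w.2) * D w)
        ≤ K * (4 * ((∑' i, c' i * D1 i) * t) + 4 * (t * (∑' j, d' j * D1 j))) :=
          mul_le_mul_right hT2 _
    _ = (4 * (∑' i, c' i * D1 i)) * (K * t) + (4 * (∑' j, d' j * D1 j)) * (K * t) := by
          rw [hKs]; ring
    _ ≤ (4 * (∑' i, c' i * D1 i)) * 1 + (4 * (∑' j, d' j * D1 j)) * 1 := by
          apply add_le_add
          · exact mul_le_mul_right (by rw [hKs]; exact ENNReal.inv_mul_le_one t) _
          · exact mul_le_mul_right (by rw [hKs]; exact ENNReal.inv_mul_le_one t) _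
    _ = 4 * (∑' i, c' i * D1 i) + 4 * (∑' j, d' j * D1 j) := by rw [mul_one, mul_one]
    _ ≤ 4 * (2 * δ) + 4 * (2 * δ) := add_le_add
          (mul_le_mul_right hGp_fst _) (mul_le_mul_right hGp_snd _)
    _ = 16 * δ := by ring
  calc costM x (eM p0 c d)
      = (∑' w : ℕ × ℕ, planM p0 w * D w) + K * (∑' w : ℕ × ℕ, (c' w.1 * d' w.2) * D w) :=
        hsplit
  _ ≤ W + 16 * δ := add_le_add h1 hKT

/-- The measurable ε-optimal coupling selector for probability vectors indexed by ℕ,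
with cost given by squared distances between the points `x i`. -/
lemma selector_exists (x : ℕ → S) (ε' : ℝ≥0∞) (hε0 : ε' ≠ 0) (hεt : ε' ≠ ⊤) :
    ∃ E : ((ℕ → ℝ≥0∞) × (ℕ → ℝ≥0∞)) → ℕ × ℕ → ℝ≥0∞,
      Measurable E ∧
      ∀ c d : ℕ → ℝ≥0∞, (∑' i, c i) = 1 → (∑' j, d j) = 1 →
        ((∀ i, (∑' j, E (c, d) (i, j)) = c i) ∧
         (∀ j, (∑' i, E (c, d) (i, j)) = d j) ∧
         (∀ G : ℕ × ℕ → ℝ≥0∞,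
            (∀ i, (∑' j, G (i, j)) = c i) → (∀ j, (∑' i, G (i, j)) = d j) →
            (∑' i, c i * edist (x i) (x 0) ^ (2:ℕ)) ≠ ⊤ →
            (∑' j, d j * edist (x j) (x 0) ^ (2:ℕ)) ≠ ⊤ →
            costM x (E (c, d)) ≤ costM x G + ε')) := by
  classical
  obtain ⟨pl, hpl⟩ := exists_surjective_nat ((ℕ × ℕ) →₀ ℚ)
  set F : ℕ → ((ℕ → ℝ≥0∞) × (ℕ → ℝ≥0∞)) → ℝ≥0∞ :=
    fun n cd => if feasM (pl n) cd.1 cd.2 then costM x (eM (pl n) cd.1 cd.2) else ⊤ with hFdef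
  set V : ((ℕ → ℝ≥0∞) × (ℕ → ℝ≥0∞)) → ℝ≥0∞ := fun cd => ⨅ n, F n cd with hVdef
  set SelSet : ((ℕ → ℝ≥0∞) × (ℕ → ℝ≥0∞)) → Set ℕ :=
    fun cd => {n | feasM (pl n) cd.1 cd.2 ∧ F n cd ≤ V cd + ε' / 2} with hSelSetdef
  have hε2 : ε' / 2 ≠ 0 := by
    simp only [ne_eq, ENNReal.div_eq_zero_iff]
    push_neg
    exact ⟨hε0, ENNReal.ofNat_ne_top⟩
  have hfeas0 : ∀ cd : (ℕ → ℝ≥0∞) × (ℕ → ℝ≥0∞), ∀ n, pl n = 0 → feasM (pl n) cd.1 cd.2 := by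
    intro cd n hn
    constructor
    · intro i; rw [hn]; simp [rowM, planM_zero]
    · intro j; rw [hn]; simp [colM, planM_zero]
  have hne : ∀ cd, (SelSet cd).Nonempty := by
    intro cd
    rcases eq_or_ne (V cd) ⊤ with hV | hV
    · obtain ⟨k0, hk0⟩ := hpl 0
      refine ⟨k0, hfeas0 cd k0 hk0, ?_⟩
      rw [hV]
      simp
    · have hlt : V cd < V cd + ε' / 2 := ENNReal.lt_add_right hV hε2
      obtain ⟨n, hn⟩ := iInf_lt_iff.mp (show (⨅ n, F n cd) < V cd + ε' / 2 from hlt)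
      have hfeasn : feasM (pl n) cd.1 cd.2 := by
        by_contra hcon
        rw [hFdef] at hn
        simp only [if_neg hcon] at hn
        exact absurd hn not_top_lt
      exact ⟨n, hfeasn, hn.le⟩
  set Sel : ((ℕ → ℝ≥0∞) × (ℕ → ℝ≥0∞)) → ℕ := fun cd => sInf (SelSet cd) with hSeldef
  have hSel : ∀ cd, Sel cd ∈ SelSet cd := fun cd => Nat.sInf_mem (hne cd)
  refine ⟨fun cd => eM (pl (Sel cd)) cd.1 cd.2, ?_, ?_⟩
  · -- measurability
    apply measurable_pi_lambda
    intro ij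
    have hbase : ∀ n, ∀ w : ℕ × ℕ, Measurable (fun cd : (ℕ → ℝ≥0∞) × (ℕ → ℝ≥0∞) =>
        eM (pl n) cd.1 cd.2 w) := by
      intro n w
      apply Measurable.const_add
      apply Measurable.const_mul
      exact (((measurable_pi_apply w.1).comp measurable_fst).sub measurable_const).mul
        (((measurable_pi_apply w.2).comp measurable_snd).sub measurable_const)
    have hfeasSet : ∀ n, MeasurableSet {cd : (ℕ → ℝ≥0∞) × (ℕ → ℝ≥0∞) |
        feasM (pl n) cd.1 cd.2} := by
      intro n
      have : {cd : (ℕ → ℝ≥0∞) × (ℕ → ℝ≥0∞) | feasM (pl n) cd.1 cd.2} =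
          (⋂ i, {cd : (ℕ → ℝ≥0∞) × (ℕ → ℝ≥0∞) | rowM (pl n) i ≤ cd.1 i}) ∩
          (⋂ j, {cd : (ℕ → ℝ≥0∞) × (ℕ → ℝ≥0∞) | colM (pl n) j ≤ cd.2 j}) := by
        ext cd
        simp only [Set.mem_setOf_eq, Set.mem_inter_iff, Set.mem_iInter, feasM]
      rw [this]
      refine MeasurableSet.inter (MeasurableSet.iInter fun i : ℕ => ?_)
        (MeasurableSet.iInter fun j : ℕ => ?_)
      · apply measurableSet_le measurable_const
        exact (measurable_pi_apply i).comp measurable_fst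
      · apply measurableSet_le measurable_const
        exact (measurable_pi_apply j).comp measurable_snd
    have hcostmeas : ∀ n, Measurable (fun cd : (ℕ → ℝ≥0∞) × (ℕ → ℝ≥0∞) =>
        costM x (eM (pl n) cd.1 cd.2)) := by
      intro n
      apply Measurable.ennreal_tsum
      intro w
      exact (hbase n w).mul measurable_const
    have hFmeas : ∀ n, Measurable (F n) := fun n =>
      Measurable.ite (hfeasSet n) (hcostmeas n) measurable_const
    have hVmeas : Measurable V := by
      have h : Measurable fun cd : (ℕ → ℝ≥0∞) × (ℕ → ℝ≥0∞) => ⨅ n : ℕ, F n cd :=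
        Measurable.iInf hFmeas
      exact h
    have hSSmeas : ∀ n, MeasurableSet {cd : (ℕ → ℝ≥0∞) × (ℕ → ℝ≥0∞) | n ∈ SelSet cd} := by
      intro n
      have hset : {cd : (ℕ → ℝ≥0∞) × (ℕ → ℝ≥0∞) | n ∈ SelSet cd} =
          {cd : (ℕ → ℝ≥0∞) × (ℕ → ℝ≥0∞) | feasM (pl n) cd.1 cd.2} ∩
          {cd : (ℕ → ℝ≥0∞) × (ℕ → ℝ≥0∞) | F n cd ≤ V cd + ε' / 2} := rfl
      rw [hset]
      exact (hfeasSet n).inter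
        (measurableSet_le (hFmeas n) (hVmeas.add measurable_const))
    have hSelmeas : ∀ n, MeasurableSet {cd : (ℕ → ℝ≥0∞) × (ℕ → ℝ≥0∞) | Sel cd = n} := by
      intro n
      have hset : {cd : (ℕ → ℝ≥0∞) × (ℕ → ℝ≥0∞) | Sel cd = n} =
          {cd : (ℕ → ℝ≥0∞) × (ℕ → ℝ≥0∞) | n ∈ SelSet cd} ∩
          (⋂ m ∈ Finset.range n, {cd : (ℕ → ℝ≥0∞) × (ℕ → ℝ≥0∞) | m ∈ SelSet cd}ᶜ) := by
        ext cd
        simp only [Set.mem_setOf_eq, Set.mem_inter_iff, Set.mem_iInter, Set.mem_compl_iff,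
          Finset.mem_range]
        constructor
        · rintro rfl
          exact ⟨Nat.sInf_mem (hne cd), fun m hm => Nat.notMem_of_lt_sInf hm⟩
        · rintro ⟨hmem, hlt⟩
          refine le_antisymm (Nat.sInf_le hmem) ?_
          by_contra hcon
          push_neg at hcon
          exact hlt _ hcon (Nat.sInf_mem (hne cd))
      rw [hset]
      exact (hSSmeas n).inter
        (MeasurableSet.biInter (Finset.range n).countable_toSet
          (fun m _ => (hSSmeas m).compl))
    have key : (fun cd : (ℕ → ℝ≥0∞) × (ℕ → ℝ≥0∞) => eM (pl (Sel cd)) cd.1 cd.2 ij) =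
        fun cd => ∑' n, Set.indicator {cd' : (ℕ → ℝ≥0∞) × (ℕ → ℝ≥0∞) | Sel cd' = n}
          (fun cd'' => eM (pl n) cd''.1 cd''.2 ij) cd := by
      funext cd
      rw [tsum_eq_single (Sel cd) ?_]
      · rw [Set.indicator_of_mem (by exact rfl)]
      · intro n hn
        rw [Set.indicator_of_notMem]
        simp only [Set.mem_setOf_eq]
        exact fun h => hn h.symm
    rw [key]
    exact Measurable.ennreal_tsum fun n => (hbase n ij).indicator (hSelmeas n)
  · intro c d hc hd
    have hfeassel := (hSel (c, d)).1
    refine ⟨eM_row (pl (Sel (c, d))) c d hc hd hfeassel,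
      eM_col (pl (Sel (c, d))) c d hc hd hfeassel, ?_⟩
    intro G hGr hGc hmc hmd
    have hδ0 : (ε' / 2 / 16 : ℝ≥0∞) ≠ 0 := by
      simp only [ne_eq, ENNReal.div_eq_zero_iff]
      push_neg
      refine ⟨?_, by norm_num⟩
      simp only [ne_eq, ENNReal.div_eq_zero_iff]
      push_neg
      exact ⟨hε0, ENNReal.ofNat_ne_top⟩
    have hδt : (ε' / 2 / 16 : ℝ≥0∞) ≠ ⊤ := by
      have h1 : (ε' / 2 : ℝ≥0∞) ≠ ⊤ :=
        (ENNReal.div_lt_top hεt (by norm_num)).ne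
      exact (ENNReal.div_lt_top h1 (by norm_num)).ne
    obtain ⟨p, hpfeas, hpcost⟩ := exists_plan_approx x hc hd G hGr hGc hmc hmd hδ0 hδt
    obtain ⟨kp, hkp⟩ := hpl p
    have hV_le : V (c, d) ≤ costM x G + ε' / 2 := by
      calc V (c, d) ≤ F kp (c, d) := iInf_le _ kp
      _ = costM x (eM (pl kp) c d) := by
          rw [hFdef]
          simp only
          rw [if_pos (by rw [hkp]; exact hpfeas)]
      _ = costM x (eM p c d) := by rw [hkp]
      _ ≤ costM x G + 16 * (ε' / 2 / 16) := hpcost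
      _ ≤ costM x G + ε' / 2 := by
          apply add_le_add_right
          calc (16 : ℝ≥0∞) * (ε' / 2 / 16) = (ε' / 2) * ((16:ℝ≥0∞)⁻¹ * 16) := by
                rw [div_eq_mul_inv, div_eq_mul_inv]; ring
          _ ≤ (ε' / 2) * 1 := mul_le_mul_right (ENNReal.inv_mul_le_one _) _
          _ = ε' / 2 := mul_one _
    have hcost_sel : costM x (eM (pl (Sel (c, d))) c d) ≤ V (c, d) + ε' / 2 := by
      have := (hSel (c, d)).2
      rw [hFdef] at this
      simp only [if_pos hfeassel] at this
      exact this
    calc costM x (eM (pl (Sel (c, d))) c d) ≤ V (c, d) + ε' / 2 := hcost_sel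
    _ ≤ (costM x G + ε' / 2) + ε' / 2 := add_le_add_left hV_le _
    _ = costM x G + ε' := by rw [add_assoc, ENNReal.add_halves]

end Selector

section Cells

/-- Decomposition of a separable metric space into countably many measurable cells of
radius at most ε, each with a representative point. -/
lemma cells_exist {S : Type*} [MetricSpace S] [MeasurableSpace S] [BorelSpace S]
    [TopologicalSpace.SeparableSpace S] [Nonempty S] {ε : ℝ≥0∞} (hε : ε ≠ 0) :
    ∃ (cell : ℕ → Set S) (x : ℕ → S),
      (∀ i, MeasurableSet (cell i)) ∧
      (Pairwise (Function.onFun Disjoint cell)) ∧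
      ((⋃ i, cell i) = Set.univ) ∧
      (∀ i, ∀ u ∈ cell i, edist u (x i) ≤ ε) := by
  classical
  set u : ℕ → S := TopologicalSpace.denseSeq S with hu
  set B : ℕ → Set S := fun i => EMetric.closedBall (u i) (ε / 2) with hB
  have hBmeas : ∀ i, MeasurableSet (B i) :=
    fun i => Metric.isClosed_closedEBall.measurableSet
  have hcover : ∀ y : S, ∃ i, y ∈ B i := by
    intro y
    have hy : y ∈ closure (Set.range u) := by
      rw [(TopologicalSpace.denseRange_denseSeq S).closure_eq]
      trivial
    have hhalf : (0:ℝ≥0∞) < ε / 2 := by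
      simp only [pos_iff_ne_zero, ne_eq, ENNReal.div_eq_zero_iff]
      push_neg
      exact ⟨hε, ENNReal.ofNat_ne_top⟩
    obtain ⟨z, hz, hdist⟩ := EMetric.mem_closure_iff.mp hy (ε / 2) hhalf
    obtain ⟨i, rfl⟩ := hz
    exact ⟨i, le_of_lt hdist⟩
  set cell : ℕ → Set S := fun i => B i \ ⋃ (j : ℕ) (_ : j < i), B j with hcell
  have hcellsub : ∀ i, cell i ⊆ B i := fun i => Set.diff_subset
  have hcellmeas : ∀ i, MeasurableSet (cell i) := by
    intro i
    exact (hBmeas i).diff (MeasurableSet.iUnion fun j =>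
      MeasurableSet.iUnion fun _ => hBmeas j)
  have hdisj : Pairwise (Function.onFun Disjoint cell) := by
    have hkey : ∀ i j : ℕ, i < j → Disjoint (cell i) (cell j) := by
      intro i j hlt
      rw [Set.disjoint_left]
      intro a ha hacellj
      have hnot : a ∉ ⋃ (m : ℕ) (_ : m < j), B m := hacellj.2
      exact hnot (Set.mem_iUnion.mpr ⟨i, Set.mem_iUnion.mpr ⟨hlt, hcellsub i ha⟩⟩)
    intro i j hij
    rcases lt_or_gt_of_ne hij with h | h
    · exact hkey i j h
    · exact (hkey j i h).symm
  have hunion : (⋃ i, cell i) = Set.univ := by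
    ext y
    simp only [Set.mem_iUnion, Set.mem_univ, iff_true]
    have hex : ∃ i, y ∈ B i := hcover y
    refine ⟨Nat.find hex, ?_, ?_⟩
    · exact Nat.find_spec hex
    · intro hmem
      obtain ⟨m, hm⟩ := Set.mem_iUnion.mp hmem
      obtain ⟨hmlt, hymem⟩ := Set.mem_iUnion.mp hm
      exact Nat.find_min hex hmlt hymem
  set x : ℕ → S := fun i => if h : (cell i).Nonempty then h.some else Classical.arbitrary S
    with hx
  refine ⟨cell, x, hcellmeas, hdisj, hunion, ?_⟩
  intro i u' hu'
  have hne : (cell i).Nonempty := ⟨u', hu'⟩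
  have hxi : x i ∈ cell i := by
    rw [hx]
    simp only [dif_pos hne]
    exact hne.some_mem
  calc edist u' (x i) ≤ edist u' (u i) + edist (u i) (x i) := edist_triangle _ _ _
  _ ≤ ε / 2 + ε / 2 := by
      apply add_le_add
      · exact EMetric.mem_closedBall.mp (hcellsub i hu')
      · rw [edist_comm]
        exact EMetric.mem_closedBall.mp (hcellsub i hxi)
  _ = ε := ENNReal.add_halves ε

end Cells


section W2facts

variable {X : Type*} [MeasurableSpace X] [PseudoEMetricSpace X]

lemma W2sq_le_cost {μ ν : Measure X} (γ : Measure (X × X)) (h1 : γ.fst = μ)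
    (h2 : γ.snd = ν) : W2sq μ ν ≤ ∫⁻ p, edist p.1 p.2 ^ 2 ∂γ :=
  iInf₂_le γ ⟨h1, h2⟩

lemma exists_coupling_cost_lt {μ ν : Measure X} {r : ℝ≥0∞} (h : W2sq μ ν < r) :
    ∃ γ : Measure (X × X), γ.fst = μ ∧ γ.snd = ν ∧ (∫⁻ p, edist p.1 p.2 ^ 2 ∂γ) < r := by
  rw [W2sq] at h
  obtain ⟨γ, hγ⟩ := iInf_lt_iff.mp h
  obtain ⟨hmem, hlt⟩ := iInf_lt_iff.mp hγ
  exact ⟨γ, hmem.1, hmem.2, hlt⟩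

lemma W2_eq_SR (μ ν : Measure X) : W2 μ ν = SR (W2sq μ ν) := rfl

lemma W2sq_eq_sq_W2 (μ ν : Measure X) : W2sq μ ν = (W2 μ ν) ^ (2:ℕ) := by
  rw [W2_eq_SR, sq_SR]

lemma W2sq_le_sq {μ ν : Measure X} {L : ℝ≥0∞} (h : W2 μ ν ≤ L) :
    W2sq μ ν ≤ L ^ (2:ℕ) := by
  rw [W2sq_eq_sq_W2]
  exact sq_mono h

end W2facts

section Mink

/-- Minkowski-type bound: adding a constant inside a squared L² integral. -/
lemma lintegral_sq_add_const_le {α : Type*} [MeasurableSpace α] (μ : Measure α)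
    [IsProbabilityMeasure μ] (f : α → ℝ≥0∞) (hf : Measurable f) (k : ℝ≥0∞) :
    ∫⁻ a, (f a + k) ^ (2:ℕ) ∂μ ≤ (SR (∫⁻ a, f a ^ (2:ℕ) ∂μ) + k) ^ (2:ℕ) := by
  set g : α → ℝ≥0∞ := fun _ => k with hg
  have hgm : Measurable g := measurable_const
  have hLp := ENNReal.lintegral_Lp_add_le (p := (2:ℝ)) (μ := μ)
    hf.aemeasurable hgm.aemeasurable (by norm_num)
  have hcast : ∀ y : ℝ≥0∞, y ^ (2:ℝ) = y ^ (2:ℕ) := by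
    intro y
    rw [← ENNReal.rpow_natCast y 2]
    norm_num
  have h1 : ∫⁻ a, ((f + g) a) ^ (2:ℝ) ∂μ = ∫⁻ a, (f a + k) ^ (2:ℕ) ∂μ := by
    congr 1; funext a; rw [hcast]; simp [hg]
  have h2 : ∫⁻ a, (f a) ^ (2:ℝ) ∂μ = ∫⁻ a, f a ^ (2:ℕ) ∂μ := by
    congr 1; funext a; rw [hcast]
  have h3 : (∫⁻ a, (g a) ^ (2:ℝ) ∂μ) = k ^ (2:ℕ) := by
    simp only [hg]
    rw [lintegral_const, measure_univ, mul_one, hcast]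
  rw [h1, h2, h3] at hLp
  have hhalf : (1:ℝ)/2 = 1/(2:ℝ) := rfl
  -- hLp : (∫⁻ (f+k)^2)^(1/2) ≤ (∫⁻ f^2)^(1/2) + (k^2)^(1/2)
  have hSR : SR (∫⁻ a, (f a + k) ^ (2:ℕ) ∂μ) ≤ SR (∫⁻ a, f a ^ (2:ℕ) ∂μ) + k := by
    calc SR (∫⁻ a, (f a + k) ^ (2:ℕ) ∂μ)
        ≤ (∫⁻ a, f a ^ (2:ℕ) ∂μ) ^ ((1:ℝ)/2) + (k ^ (2:ℕ)) ^ ((1:ℝ)/2) := hLp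
    _ = SR (∫⁻ a, f a ^ (2:ℕ) ∂μ) + SR (k ^ (2:ℕ)) := rfl
    _ = SR (∫⁻ a, f a ^ (2:ℕ) ∂μ) + k := by rw [SR_sq]
  calc ∫⁻ a, (f a + k) ^ (2:ℕ) ∂μ
      = (SR (∫⁻ a, (f a + k) ^ (2:ℕ) ∂μ)) ^ (2:ℕ) := (sq_SR _).symm
  _ ≤ (SR (∫⁻ a, f a ^ (2:ℕ) ∂μ) + k) ^ (2:ℕ) := sq_mono hSR

end Mink

section Main

open ProbabilityTheory

/-- A measure has a finite second moment. -/
def HasFiniteSecondMoment {X : Type*} [MeasurableSpace X] [PseudoEMetricSpace X]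
    (μ : Measure X) : Prop :=
  ∃ x₀ : X, ∫⁻ x, edist x x₀ ^ 2 ∂μ < ⊤

/-- if the dynamics `𝒯` are `(L_𝒮, L_𝒜)`-Lipschitz in the 2-Wasserstein sense
and the policy `π` is `K_π`-Lipschitz, then for all `s, s'` the induced kernels satisfy
`W₂(P^π(s,·), P^π(s',·)) ≤ (L_𝒮 + L_𝒜 K_π) d_𝒮(s, s')`. -/
theorem stmt_1
    {S : Type*} [MetricSpace S] [PolishSpace S] [MeasurableSpace S] [BorelSpace S]
    {A : Type*} [MetricSpace A] [PolishSpace A] [MeasurableSpace A] [BorelSpace A]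
    (T : S → A → Measure S) (hT : Measurable (fun p : S × A => T p.1 p.2))
    [∀ s a, IsProbabilityMeasure (T s a)]
    (π : S → Measure A) (hπ : Measurable π) [∀ s, IsProbabilityMeasure (π s)]
    (hTmom : ∀ s a, HasFiniteSecondMoment (T s a))
    (hπmom : ∀ s, HasFiniteSecondMoment (π s))
    (LS LA Kπ : ℝ≥0)
    (hTLip : ∀ s s' : S, ∀ a a' : A,
      W2 (T s a) (T s' a') ≤ (LS : ℝ≥0∞) * edist s s' + (LA : ℝ≥0∞) * edist a a')
    (hπLip : ∀ s s' : S, W2 (π s) (π s') ≤ (Kπ : ℝ≥0∞) * edist s s')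
    (s s' : S) :
    W2 ((π s).bind (T s)) ((π s').bind (T s')) ≤
      ((LS : ℝ≥0∞) + (LA : ℝ≥0∞) * (Kπ : ℝ≥0∞)) * edist s s' := by
  classical
  haveI : Nonempty S := ⟨s⟩
  have hTs : Measurable (T s) := hT.comp measurable_prodMk_left
  have hTs' : Measurable (T s') := hT.comp measurable_prodMk_left
  set Δ : ℝ≥0∞ := edist s s' with hΔdef
  apply ENNReal.le_of_forall_pos_le_add
  intro θ hθ hRlt
  set θ4 : ℝ≥0∞ := (θ : ℝ≥0∞) / 4 with hθ4def
  have hθ40 : θ4 ≠ 0 := by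
    rw [hθ4def]
    simp only [ne_eq, ENNReal.div_eq_zero_iff]
    push_neg
    exact ⟨by exact_mod_cast hθ.ne', by norm_num⟩
  have hθ4t : θ4 ≠ ⊤ := by
    rw [hθ4def]
    exact (ENNReal.div_lt_top ENNReal.coe_ne_top (by norm_num)).ne
  set ε : ℝ≥0∞ := θ4 / 4 with hεdef
  have hε0 : ε ≠ 0 := by
    rw [hεdef]
    simp only [ne_eq, ENNReal.div_eq_zero_iff]
    push_neg
    exact ⟨hθ40, by norm_num⟩
  have hεt : ε ≠ ⊤ := by
    rw [hεdef]
    exact (ENNReal.div_lt_top hθ4t (by norm_num)).ne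
  set σ : ℝ≥0∞ := θ4 ^ (2:ℕ) with hσdef
  have hσ0 : σ ≠ 0 := by rw [hσdef]; exact pow_ne_zero 2 hθ40
  set σ₂ : ℝ≥0∞ := (θ4 * ((LA : ℝ≥0∞) + 1)⁻¹) ^ (2:ℕ) with hσ₂def
  have hσ₂0 : σ₂ ≠ 0 := by
    rw [hσ₂def]
    apply pow_ne_zero
    apply mul_ne_zero hθ40
    simp only [ne_eq, ENNReal.inv_eq_zero]
    exact ENNReal.add_ne_top.mpr ⟨ENNReal.coe_ne_top, ENNReal.one_ne_top⟩
  set ε' : ℝ≥0∞ := θ4 ^ (2:ℕ) with hε'def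
  have hε'0 : ε' ≠ 0 := by rw [hε'def]; exact pow_ne_zero 2 hθ40
  have hε't : ε' ≠ ⊤ := by
    rw [hε'def]
    exact pow_ne_top hθ4t
  -- cells and selector
  obtain ⟨cell, x, hcellmeas, hcelldisj, hcellunion, hcelldiam⟩ :=
    cells_exist (S := S) (ε := ε) hε0
  obtain ⟨E, hEmeas, hEspec⟩ := selector_exists (S := S) x ε' hε'0 hε't
  -- cell-mass vectors
  set cc : A × A → ℕ → ℝ≥0∞ := fun p i => T s p.1 (cell i) with hccdef
  set dd : A × A → ℕ → ℝ≥0∞ := fun p j => T s' p.2 (cell j) with hdddef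
  have hccmeas : Measurable cc := by
    apply measurable_pi_lambda
    intro i
    exact (Measure.measurable_coe (hcellmeas i)).comp (hTs.comp measurable_fst)
  have hddmeas : Measurable dd := by
    apply measurable_pi_lambda
    intro j
    exact (Measure.measurable_coe (hcellmeas j)).comp (hTs'.comp measurable_snd)
  have hsum_meas : ∀ (ρ : Measure S) [IsProbabilityMeasure ρ], (∑' i, ρ (cell i)) = 1 := by
    intro ρ hρ
    rw [← measure_iUnion hcelldisj hcellmeas, hcellunion, measure_univ]
  have hccsum : ∀ p, (∑' i, cc p i) = 1 := fun p => hsum_meas (T s p.1)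
  have hddsum : ∀ p, (∑' j, dd p j) = 1 := fun p => hsum_meas (T s' p.2)
  -- near-optimal couplings of the transition fibers
  have hTfin : ∀ p : A × A, W2sq (T s p.1) (T s' p.2) <
      ((LS : ℝ≥0∞) * Δ + (LA : ℝ≥0∞) * edist p.1 p.2) ^ (2:ℕ) + σ := by
    intro p
    have h1 : W2sq (T s p.1) (T s' p.2) ≤
        ((LS : ℝ≥0∞) * Δ + (LA : ℝ≥0∞) * edist p.1 p.2) ^ (2:ℕ) :=
      W2sq_le_sq (hTLip s s' p.1 p.2)
    refine h1.trans_lt (ENNReal.lt_add_right ?_ hσ0)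
    apply pow_ne_top
    apply ENNReal.add_ne_top.mpr
    constructor
    · exact ENNReal.mul_ne_top ENNReal.coe_ne_top (edist_ne_top s s')
    · exact ENNReal.mul_ne_top ENNReal.coe_ne_top (edist_ne_top p.1 p.2)
  choose γp hγ1 hγ2 hγ3 using fun p : A × A => exists_coupling_cost_lt (hTfin p)
  haveI hγprob : ∀ p, IsProbabilityMeasure (γp p) := by
    intro p
    constructor
    have h1 : (γp p).fst Set.univ = 1 := by
      rw [hγ1 p]; exact measure_univ
    rw [Measure.fst_apply MeasurableSet.univ] at h1
    simpa using h1
  -- the induced cell-pair matrices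
  set G : A × A → ℕ × ℕ → ℝ≥0∞ := fun p w => γp p (cell w.1 ×ˢ cell w.2) with hGdef
  have hfstpre : ∀ i : ℕ, (Prod.fst ⁻¹' (cell i) : Set (S × S)) = cell i ×ˢ Set.univ := by
    intro i; ext q; simp [Set.mem_prod]
  have hsndpre : ∀ j : ℕ, (Prod.snd ⁻¹' (cell j) : Set (S × S)) = Set.univ ×ˢ cell j := by
    intro j; ext q; simp [Set.mem_prod]
  have hGrow : ∀ p i, (∑' j, G p (i, j)) = cc p i := by
    intro p i
    have hdisj2 : Pairwise (Function.onFun Disjoint (fun j => cell i ×ˢ cell j)) := by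
      intro j j' hne
      rw [Function.onFun, Set.disjoint_left]
      rintro ⟨u, v⟩ huv huv'
      exact (Set.disjoint_left.mp (hcelldisj hne)) huv.2 huv'.2
    have hmeas2 : ∀ j, MeasurableSet (cell i ×ˢ cell j) :=
      fun j => (hcellmeas i).prod (hcellmeas j)
    calc (∑' j, G p (i, j)) = γp p (⋃ j, cell i ×ˢ cell j) :=
          (measure_iUnion hdisj2 hmeas2).symm
    _ = γp p (cell i ×ˢ Set.univ) := by rw [← Set.prod_iUnion, hcellunion]
    _ = (γp p).fst (cell i) := by rw [Measure.fst_apply (hcellmeas i), hfstpre]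
    _ = cc p i := by rw [hγ1 p]
  have hGcol : ∀ p j, (∑' i, G p (i, j)) = dd p j := by
    intro p j
    have hdisj2 : Pairwise (Function.onFun Disjoint (fun i => cell i ×ˢ cell j)) := by
      intro i i' hne
      rw [Function.onFun, Set.disjoint_left]
      rintro ⟨u, v⟩ huv huv'
      exact (Set.disjoint_left.mp (hcelldisj hne)) huv.1 huv'.1
    have hmeas2 : ∀ i, MeasurableSet (cell i ×ˢ cell j) :=
      fun i => (hcellmeas i).prod (hcellmeas j)
    calc (∑' i, G p (i, j)) = γp p (⋃ i, cell i ×ˢ cell j) :=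
          (measure_iUnion hdisj2 hmeas2).symm
    _ = γp p (Set.univ ×ˢ cell j) := by rw [← Set.iUnion_prod_const, hcellunion]
    _ = (γp p).snd (cell j) := by rw [Measure.snd_apply (hcellmeas j), hsndpre]
    _ = dd p j := by rw [hγ2 p]
  -- moment bounds for the cell-mass vectors
  have hmom_gen : ∀ (ρ : Measure S) [IsProbabilityMeasure ρ], HasFiniteSecondMoment ρ →
      (∑' i, ρ (cell i) * edist (x i) (x 0) ^ (2:ℕ)) ≠ ⊤ := by
    intro ρ hρ hmom
    obtain ⟨b, hb⟩ := hmom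
    set K : ℝ≥0∞ := ε + edist b (x 0) with hKdef
    have hKt : K ≠ ⊤ :=
      ENNReal.add_ne_top.mpr ⟨hεt, edist_ne_top b (x 0)⟩
    have hedistb : Measurable fun u : S => edist u b := by
      exact (continuous_id.edist continuous_const).measurable
    have hgmeas : Measurable (fun u : S => 4 * edist u b ^ (2:ℕ) + 4 * K ^ (2:ℕ)) := by
      apply Measurable.add _ measurable_const
      exact (hedistb.pow measurable_const).const_mul 4
    have hptw : ∀ i, ∀ u ∈ cell i,
        edist (x i) (x 0) ^ (2:ℕ) ≤ 4 * edist u b ^ (2:ℕ) + 4 * K ^ (2:ℕ) := by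
      intro i u hu
      have h1 : edist (x i) (x 0) ≤ edist u b + K := by
        calc edist (x i) (x 0) ≤ edist (x i) u + edist u (x 0) := edist_triangle _ _ _
        _ ≤ edist (x i) u + (edist u b + edist b (x 0)) :=
            add_le_add_right (edist_triangle _ _ _) _
        _ ≤ ε + (edist u b + edist b (x 0)) := by
            apply add_le_add_left
            rw [edist_comm]
            exact hcelldiam i u hu
        _ = edist u b + K := by rw [hKdef]; ring
      calc edist (x i) (x 0) ^ (2:ℕ) ≤ (edist u b + K) ^ (2:ℕ) := sq_mono h1
      _ ≤ 4 * edist u b ^ (2:ℕ) + 4 * K ^ (2:ℕ) := sq_add_le _ _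
    have hterm : ∀ i, ρ (cell i) * edist (x i) (x 0) ^ (2:ℕ) ≤
        ∫⁻ u in cell i, (4 * edist u b ^ (2:ℕ) + 4 * K ^ (2:ℕ)) ∂ρ := by
      intro i
      calc ρ (cell i) * edist (x i) (x 0) ^ (2:ℕ)
          = edist (x i) (x 0) ^ (2:ℕ) * ρ (cell i) := mul_comm _ _
      _ = ∫⁻ _ in cell i, edist (x i) (x 0) ^ (2:ℕ) ∂ρ := (setLIntegral_const _ _).symm
      _ ≤ ∫⁻ u in cell i, (4 * edist u b ^ (2:ℕ) + 4 * K ^ (2:ℕ)) ∂ρ :=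
          setLIntegral_mono hgmeas (hptw i)
    have htotal : (∑' i, ρ (cell i) * edist (x i) (x 0) ^ (2:ℕ)) ≤
        4 * (∫⁻ u, edist u b ^ (2:ℕ) ∂ρ) + 4 * K ^ (2:ℕ) := by
      calc (∑' i, ρ (cell i) * edist (x i) (x 0) ^ (2:ℕ))
          ≤ ∑' i, ∫⁻ u in cell i, (4 * edist u b ^ (2:ℕ) + 4 * K ^ (2:ℕ)) ∂ρ :=
            Summable.tsum_le_tsum hterm ENNReal.summable ENNReal.summable
      _ = ∫⁻ u in ⋃ i, cell i, (4 * edist u b ^ (2:ℕ) + 4 * K ^ (2:ℕ)) ∂ρ :=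
            (lintegral_iUnion hcellmeas hcelldisj _).symm
      _ = ∫⁻ u, (4 * edist u b ^ (2:ℕ) + 4 * K ^ (2:ℕ)) ∂ρ := by
            rw [hcellunion, Measure.restrict_univ]
      _ = 4 * (∫⁻ u, edist u b ^ (2:ℕ) ∂ρ) + 4 * K ^ (2:ℕ) := by
            rw [lintegral_add_left ((hedistb.pow measurable_const).const_mul 4)]
            rw [lintegral_const, measure_univ, mul_one]
            rw [lintegral_const_mul _ (hedistb.pow measurable_const)]
    apply ne_top_of_le_ne_top _ htotal
    apply ENNReal.add_ne_top.mpr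
    constructor
    · exact ENNReal.mul_ne_top (by norm_num) hb.ne
    · exact ENNReal.mul_ne_top (by norm_num) (pow_ne_top hKt)
  have hmomc : ∀ p, (∑' i, cc p i * edist (x i) (x 0) ^ (2:ℕ)) ≠ ⊤ :=
    fun p => hmom_gen (T s p.1) (hTmom s p.1)
  have hmomd : ∀ p, (∑' j, dd p j * edist (x j) (x 0) ^ (2:ℕ)) ≠ ⊤ :=
    fun p => hmom_gen (T s' p.2) (hTmom s' p.2)
  -- normalized cell-restriction kernels
  have hκmeas : ∀ i : ℕ, Measurable (fun p : A × A =>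
      ((T s p.1 (cell i))⁻¹ • ((T s p.1).restrict (cell i)) : Measure S)) := by
    intro i
    apply Measure.measurable_of_measurable_coe
    intro B hB
    simp only [Measure.smul_apply, Measure.restrict_apply hB, smul_eq_mul]
    exact (((Measure.measurable_coe (hcellmeas i)).comp (hTs.comp measurable_fst)).inv).mul
      ((Measure.measurable_coe (hB.inter (hcellmeas i))).comp (hTs.comp measurable_fst))
  have hκ'meas : ∀ j : ℕ, Measurable (fun p : A × A =>
      ((T s' p.2 (cell j))⁻¹ • ((T s' p.2).restrict (cell j)) : Measure S)) := by
    intro j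
    apply Measure.measurable_of_measurable_coe
    intro B hB
    simp only [Measure.smul_apply, Measure.restrict_apply hB, smul_eq_mul]
    exact (((Measure.measurable_coe (hcellmeas j)).comp (hTs'.comp measurable_snd)).inv).mul
      ((Measure.measurable_coe (hB.inter (hcellmeas j))).comp (hTs'.comp measurable_snd))
  set κ : ℕ → Kernel (A × A) S := fun i =>
    ⟨fun p => (T s p.1 (cell i))⁻¹ • ((T s p.1).restrict (cell i)), hκmeas i⟩ with hκdef
  set κ' : ℕ → Kernel (A × A) S := fun j =>
    ⟨fun p => (T s' p.2 (cell j))⁻¹ • ((T s' p.2).restrict (cell j)), hκ'meas j⟩ with hκ'def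
  have hκapp : ∀ i p, κ i p = (T s p.1 (cell i))⁻¹ • ((T s p.1).restrict (cell i)) :=
    fun i p => rfl
  have hκ'app : ∀ j p, κ' j p = (T s' p.2 (cell j))⁻¹ • ((T s' p.2).restrict (cell j)) :=
    fun j p => rfl
  have hnorm_le_one : ∀ (ρ : Measure S) (c : Set S), MeasurableSet c →
      ((ρ c)⁻¹ • ρ.restrict c) Set.univ ≤ 1 := by
    intro ρ c hc
    rw [Measure.smul_apply, Measure.restrict_apply MeasurableSet.univ, Set.univ_inter,
      smul_eq_mul]
    exact ENNReal.inv_mul_le_one _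
  haveI hκfin : ∀ i, IsFiniteKernel (κ i) := by
    intro i
    refine ⟨⟨1, ENNReal.one_lt_top, fun p => ?_⟩⟩
    rw [hκapp]
    exact hnorm_le_one _ _ (hcellmeas i)
  haveI hκ'fin : ∀ j, IsFiniteKernel (κ' j) := by
    intro j
    refine ⟨⟨1, ENNReal.one_lt_top, fun p => ?_⟩⟩
    rw [hκ'app]
    exact hnorm_le_one _ _ (hcellmeas j)
  -- the fiberwise coupling
  set Φ : A × A → Measure (S × S) := fun p =>
    Measure.sum (fun w : ℕ × ℕ => E (cc p, dd p) w • ((κ w.1 ×ₖ κ' w.2) p)) with hΦdef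
  have hEcomp : ∀ w : ℕ × ℕ, Measurable (fun p : A × A => E (cc p, dd p) w) := by
    intro w
    exact (measurable_pi_apply w).comp (hEmeas.comp (hccmeas.prodMk hddmeas))
  have hΦmeas : Measurable Φ := by
    apply Measure.measurable_of_measurable_coe
    intro B hB
    have h : ∀ p, Φ p B = ∑' w : ℕ × ℕ, E (cc p, dd p) w * ((κ w.1 ×ₖ κ' w.2) p B) := by
      intro p
      rw [hΦdef]
      rw [Measure.sum_apply _ hB]
      simp [Measure.smul_apply]
    simp only [h]
    apply Measurable.ennreal_tsum
    intro w
    exact (hEcomp w).mul ((κ w.1 ×ₖ κ' w.2).measurable_coe hB)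
  -- near-optimal coupling of the policies
  have hπfin : W2sq (π s) (π s') < ((Kπ : ℝ≥0∞) * Δ) ^ (2:ℕ) + σ₂ := by
    have h1 : W2sq (π s) (π s') ≤ ((Kπ : ℝ≥0∞) * Δ) ^ (2:ℕ) :=
      W2sq_le_sq (hπLip s s')
    refine h1.trans_lt (ENNReal.lt_add_right ?_ hσ₂0)
    exact pow_ne_top (ENNReal.mul_ne_top ENNReal.coe_ne_top (edist_ne_top s s'))
  obtain ⟨η, hη1, hη2, hη3⟩ := exists_coupling_cost_lt hπfin
  haveI hηprob : IsProbabilityMeasure η := by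
    constructor
    have h1 : η.fst Set.univ = 1 := by rw [hη1]; exact measure_univ
    rw [Measure.fst_apply MeasurableSet.univ] at h1
    simpa using h1
  -- the grand coupling
  set Ξ : Measure (S × S) := η.bind Φ with hΞdef
  have hprob_le : ∀ (ρ : Measure S) [IsProbabilityMeasure ρ] (c : Set S), ρ c ≤ 1 := by
    intro ρ hρ c
    exact (measure_mono (Set.subset_univ c)).trans_eq measure_univ
  have hEspec' := fun p => hEspec (cc p) (dd p) (hccsum p) (hddsum p)
  have hκuniv : ∀ j p, dd p j ≠ 0 → (κ' j p) Set.univ = 1 := by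
    intro j p hd0
    rw [hκ'app, Measure.smul_apply, Measure.restrict_apply MeasurableSet.univ,
      Set.univ_inter, smul_eq_mul]
    exact ENNReal.inv_mul_cancel hd0
      (ne_top_of_le_ne_top ENNReal.one_ne_top (hprob_le _ _))
  have hκuniv1 : ∀ i p, cc p i ≠ 0 → (κ i p) Set.univ = 1 := by
    intro i p hc0
    rw [hκapp, Measure.smul_apply, Measure.restrict_apply MeasurableSet.univ,
      Set.univ_inter, smul_eq_mul]
    exact ENNReal.inv_mul_cancel hc0
      (ne_top_of_le_ne_top ENNReal.one_ne_top (hprob_le _ _))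
  have hκcell : ∀ (B : Set S), MeasurableSet B → ∀ i p,
      ((κ i p) B) * cc p i = T s p.1 (B ∩ cell i) := by
    intro B hB i p
    rw [hκapp, Measure.smul_apply, Measure.restrict_apply hB, smul_eq_mul]
    rcases eq_or_ne (cc p i) 0 with hc0 | hc0
    · have hz : T s p.1 (B ∩ cell i) = 0 := by
        apply le_antisymm _ (zero_le)
        calc T s p.1 (B ∩ cell i) ≤ T s p.1 (cell i) :=
              measure_mono Set.inter_subset_right
        _ = 0 := hc0
      rw [hz, hc0]
      simp
    · calc ((cc p i)⁻¹ * T s p.1 (B ∩ cell i)) * cc p i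
          = T s p.1 (B ∩ cell i) * ((cc p i)⁻¹ * cc p i) := by ring
      _ = T s p.1 (B ∩ cell i) := by
          rw [ENNReal.inv_mul_cancel hc0
            (ne_top_of_le_ne_top ENNReal.one_ne_top (hprob_le _ _)), mul_one]
  have hκ'cell : ∀ (B : Set S), MeasurableSet B → ∀ j p,
      ((κ' j p) B) * dd p j = T s' p.2 (B ∩ cell j) := by
    intro B hB j p
    rw [hκ'app, Measure.smul_apply, Measure.restrict_apply hB, smul_eq_mul]
    rcases eq_or_ne (dd p j) 0 with hd0 | hd0
    · have hz : T s' p.2 (B ∩ cell j) = 0 := by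
        apply le_antisymm _ (zero_le)
        calc T s' p.2 (B ∩ cell j) ≤ T s' p.2 (cell j) :=
              measure_mono Set.inter_subset_right
        _ = 0 := hd0
      rw [hz, hd0]
      simp
    · calc ((dd p j)⁻¹ * T s' p.2 (B ∩ cell j)) * dd p j
          = T s' p.2 (B ∩ cell j) * ((dd p j)⁻¹ * dd p j) := by ring
      _ = T s' p.2 (B ∩ cell j) := by
          rw [ENNReal.inv_mul_cancel hd0
            (ne_top_of_le_ne_top ENNReal.one_ne_top (hprob_le _ _)), mul_one]
  have hmeasunion : ∀ (ρ : Measure S) (B : Set S), MeasurableSet B →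
      (∑' i, ρ (B ∩ cell i)) = ρ B := by
    intro ρ B hB
    rw [← measure_iUnion (fun i j hij => ((hcelldisj hij).mono
        Set.inter_subset_right Set.inter_subset_right))
      (fun i => hB.inter (hcellmeas i))]
    rw [← Set.inter_iUnion, hcellunion, Set.inter_univ]
  have hΦfst : ∀ p (B : Set S), MeasurableSet B → Φ p (Prod.fst ⁻¹' B) = T s p.1 B := by
    intro p B hB
    have hpre : MeasurableSet (Prod.fst ⁻¹' B : Set (S × S)) := measurable_fst hB
    have hterm : ∀ w : ℕ × ℕ, (E (cc p, dd p) w • ((κ w.1 ×ₖ κ' w.2) p)) (Prod.fst ⁻¹' B)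
        = E (cc p, dd p) w * ((κ w.1 p) B * (κ' w.2 p) Set.univ) := by
      intro w
      haveI := hκfin w.1; haveI := hκ'fin w.2
      rw [Measure.smul_apply, smul_eq_mul, Kernel.prod_apply]
      congr 1
      have hBu : (Prod.fst ⁻¹' B : Set (S × S)) = B ×ˢ Set.univ := by
        ext q; simp [Set.mem_prod]
      rw [hBu, Measure.prod_prod]
    rw [hΦdef]
    simp only
    rw [Measure.sum_apply _ hpre]
    calc (∑' w : ℕ × ℕ, (E (cc p, dd p) w • ((κ w.1 ×ₖ κ' w.2) p)) (Prod.fst ⁻¹' B))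
        = ∑' w : ℕ × ℕ, E (cc p, dd p) w * ((κ w.1 p) B * (κ' w.2 p) Set.univ) := by
          congr 1; funext w; exact hterm w
    _ = ∑' i, ∑' j, E (cc p, dd p) (i, j) * ((κ i p) B * (κ' j p) Set.univ) := by
          rw [ENNReal.tsum_prod']
    _ = ∑' i, (κ i p) B * cc p i := by
          congr 1; funext i
          calc (∑' j, E (cc p, dd p) (i, j) * ((κ i p) B * (κ' j p) Set.univ))
              = ∑' j, (κ i p) B * E (cc p, dd p) (i, j) := by
                congr 1; funext j
                rcases eq_or_ne (dd p j) 0 with hd0 | hd0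
                · have hE0 : E (cc p, dd p) (i, j) = 0 := by
                    have hcol := (hEspec' p).2.1 j
                    have hz : (∑' i', E (cc p, dd p) (i', j)) = 0 := by rw [hcol, hd0]
                    exact ENNReal.tsum_eq_zero.mp hz i
                  rw [hE0]; ring
                · rw [hκuniv j p hd0, mul_one, mul_comm]
          _ = (κ i p) B * (∑' j, E (cc p, dd p) (i, j)) := ENNReal.tsum_mul_left
          _ = (κ i p) B * cc p i := by rw [(hEspec' p).1 i]
    _ = ∑' i, T s p.1 (B ∩ cell i) := by
          congr 1; funext i; exact hκcell B hB i p
    _ = T s p.1 B := hmeasunion _ B hB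
  have hΦsnd : ∀ p (B : Set S), MeasurableSet B → Φ p (Prod.snd ⁻¹' B) = T s' p.2 B := by
    intro p B hB
    have hpre : MeasurableSet (Prod.snd ⁻¹' B : Set (S × S)) := measurable_snd hB
    have hterm : ∀ w : ℕ × ℕ, (E (cc p, dd p) w • ((κ w.1 ×ₖ κ' w.2) p)) (Prod.snd ⁻¹' B)
        = E (cc p, dd p) w * ((κ w.1 p) Set.univ * (κ' w.2 p) B) := by
      intro w
      haveI := hκfin w.1; haveI := hκ'fin w.2
      rw [Measure.smul_apply, smul_eq_mul, Kernel.prod_apply]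
      congr 1
      have hBu : (Prod.snd ⁻¹' B : Set (S × S)) = Set.univ ×ˢ B := by
        ext q; simp [Set.mem_prod]
      rw [hBu, Measure.prod_prod]
    rw [hΦdef]
    simp only
    rw [Measure.sum_apply _ hpre]
    calc (∑' w : ℕ × ℕ, (E (cc p, dd p) w • ((κ w.1 ×ₖ κ' w.2) p)) (Prod.snd ⁻¹' B))
        = ∑' w : ℕ × ℕ, E (cc p, dd p) w * ((κ w.1 p) Set.univ * (κ' w.2 p) B) := by
          congr 1; funext w; exact hterm w
    _ = ∑' j, ∑' i, E (cc p, dd p) (i, j) * ((κ i p) Set.univ * (κ' j p) B) := by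
          rw [ENNReal.tsum_prod', ENNReal.tsum_comm]
    _ = ∑' j, (κ' j p) B * dd p j := by
          congr 1; funext j
          calc (∑' i, E (cc p, dd p) (i, j) * ((κ i p) Set.univ * (κ' j p) B))
              = ∑' i, (κ' j p) B * E (cc p, dd p) (i, j) := by
                congr 1; funext i
                rcases eq_or_ne (cc p i) 0 with hc0 | hc0
                · have hE0 : E (cc p, dd p) (i, j) = 0 := by
                    have hrow := (hEspec' p).1 i
                    have hz : (∑' j', E (cc p, dd p) (i, j')) = 0 := by rw [hrow, hc0]
                    exact ENNReal.tsum_eq_zero.mp hz j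
                  rw [hE0]; ring
                · rw [hκuniv1 i p hc0, one_mul, mul_comm]
          _ = (κ' j p) B * (∑' i, E (cc p, dd p) (i, j)) := ENNReal.tsum_mul_left
          _ = (κ' j p) B * dd p j := by rw [(hEspec' p).2.1 j]
    _ = ∑' j, T s' p.2 (B ∩ cell j) := by
          congr 1; funext j; exact hκ'cell B hB j p
    _ = T s' p.2 B := hmeasunion _ B hB
  have hΞfst : Ξ.fst = (π s).bind (T s) := by
    apply Measure.ext
    intro B hB
    rw [Measure.fst_apply hB, hΞdef]
    rw [Measure.bind_apply (measurable_fst hB) hΦmeas.aemeasurable]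
    rw [Measure.bind_apply hB hTs.aemeasurable]
    calc (∫⁻ p, Φ p (Prod.fst ⁻¹' B) ∂η) = ∫⁻ p, T s p.1 B ∂η :=
          lintegral_congr (fun p => hΦfst p B hB)
    _ = ∫⁻ a, T s a B ∂(η.fst) := by
          have hTB : Measurable fun a => T s a B := by
            exact (Measure.measurable_coe hB).comp hTs
          rw [Measure.fst, lintegral_map hTB measurable_fst]
    _ = ∫⁻ a, T s a B ∂(π s) := by rw [hη1]
  have hΞsnd : Ξ.snd = (π s').bind (T s') := by
    apply Measure.ext
    intro B hB
    rw [Measure.snd_apply hB, hΞdef]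
    rw [Measure.bind_apply (measurable_snd hB) hΦmeas.aemeasurable]
    rw [Measure.bind_apply hB hTs'.aemeasurable]
    calc (∫⁻ p, Φ p (Prod.snd ⁻¹' B) ∂η) = ∫⁻ p, T s' p.2 B ∂η :=
          lintegral_congr (fun p => hΦsnd p B hB)
    _ = ∫⁻ a, T s' a B ∂(η.snd) := by
          have hTB : Measurable fun a => T s' a B := by
            exact (Measure.measurable_coe hB).comp hTs'
          rw [Measure.snd, lintegral_map hTB measurable_snd]
    _ = ∫⁻ a, T s' a B ∂(π s') := by rw [hη2]
  -- cost estimates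
  set B₁ : ℝ≥0∞ := (LS : ℝ≥0∞) * Δ + SR σ + 4 * ε + SR ε' with hB₁def
  have hCmeas : Measurable fun q : S × S => edist q.1 q.2 ^ (2:ℕ) :=
    measurable_edist.pow measurable_const
  have hKwmeas : ∀ w : ℕ × ℕ, MeasurableSet (cell w.1 ×ˢ cell w.2 : Set (S × S)) :=
    fun w => (hcellmeas w.1).prod (hcellmeas w.2)
  have hKwdisj : Pairwise (Function.onFun Disjoint
      (fun w : ℕ × ℕ => (cell w.1 ×ˢ cell w.2 : Set (S × S)))) := by
    intro w w' hne
    rw [Function.onFun, Set.disjoint_left]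
    rintro ⟨u, v⟩ huv huv'
    by_cases h1 : w.1 = w'.1
    · have h2 : w.2 ≠ w'.2 := by
        intro h2
        apply hne
        rw [← @Prod.mk.eta _ _ w, ← @Prod.mk.eta _ _ w', h1, h2]
      exact (Set.disjoint_left.mp (hcelldisj h2)) huv.2 huv'.2
    · exact (Set.disjoint_left.mp (hcelldisj h1)) huv.1 huv'.1
  have hKwunion : (⋃ w : ℕ × ℕ, (cell w.1 ×ˢ cell w.2 : Set (S × S))) = Set.univ := by
    ext q
    simp only [Set.mem_iUnion, Set.mem_univ, iff_true]
    have h1 : q.1 ∈ ⋃ i, cell i := by rw [hcellunion]; trivial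
    have h2 : q.2 ∈ ⋃ j, cell j := by rw [hcellunion]; trivial
    obtain ⟨i, hi⟩ := Set.mem_iUnion.mp h1
    obtain ⟨j, hj⟩ := Set.mem_iUnion.mp h2
    exact ⟨(i, j), hi, hj⟩
  have hΦcost : ∀ p : A × A, (∫⁻ q, edist q.1 q.2 ^ (2:ℕ) ∂(Φ p)) ≤
      (B₁ + (LA : ℝ≥0∞) * edist p.1 p.2) ^ (2:ℕ) := by
    intro p
    set Ep : ℕ × ℕ → ℝ≥0∞ := E (cc p, dd p) with hEpdef
    have hEpsum : (∑' w : ℕ × ℕ, Ep w) = 1 := by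
      rw [ENNReal.tsum_prod']
      calc (∑' i, ∑' j, Ep (i, j)) = ∑' i, cc p i := by
            congr 1; funext i; exact (hEspec' p).1 i
      _ = 1 := hccsum p
    set dE : ℝ≥0∞ := ∑' w : ℕ × ℕ, Ep w * edist (x w.1) (x w.2) ^ (2:ℕ) with hdEdef
    -- step 1 : expand the sum
    have hsum_cost : (∫⁻ q, edist q.1 q.2 ^ (2:ℕ) ∂(Φ p)) =
        ∑' w : ℕ × ℕ, Ep w * ∫⁻ q, edist q.1 q.2 ^ (2:ℕ) ∂((κ w.1 ×ₖ κ' w.2) p) := by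
      rw [hΦdef]
      simp only
      rw [lintegral_sum_measure]
      congr 1; funext w
      rw [lintegral_smul_measure, smul_eq_mul]
    -- step 2 : per-pair cost bound
    have hprod_cost : ∀ w : ℕ × ℕ, (∫⁻ q, edist q.1 q.2 ^ (2:ℕ) ∂((κ w.1 ×ₖ κ' w.2) p)) ≤
        (edist (x w.1) (x w.2) + 2 * ε) ^ (2:ℕ) := by
      intro w
      haveI := hκfin w.1; haveI := hκ'fin w.2
      rw [Kernel.prod_apply]
      set μw : Measure (S × S) := (κ w.1 p).prod (κ' w.2 p) with hμwdef
      have hρc : (κ w.1 p) (cell w.1)ᶜ = 0 := by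
        rw [hκapp, Measure.smul_apply, Measure.restrict_apply (hcellmeas w.1).compl,
          Set.compl_inter_self, measure_empty, smul_eq_mul, mul_zero]
      have hσc : (κ' w.2 p) (cell w.2)ᶜ = 0 := by
        rw [hκ'app, Measure.smul_apply, Measure.restrict_apply (hcellmeas w.2).compl,
          Set.compl_inter_self, measure_empty, smul_eq_mul, mul_zero]
      have hnull : μw ((cell w.1 ×ˢ cell w.2 : Set (S × S))ᶜ) = 0 := by
        have hsub : ((cell w.1 ×ˢ cell w.2 : Set (S × S))ᶜ) ⊆
            ((cell w.1)ᶜ ×ˢ (Set.univ : Set S)) ∪ ((Set.univ : Set S) ×ˢ (cell w.2)ᶜ) := by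
          rintro ⟨u, v⟩ hq
          simp only [Set.mem_compl_iff, Set.mem_prod, not_and] at hq
          by_cases hu : u ∈ cell w.1
          · right; exact ⟨trivial, hq hu⟩
          · left; exact ⟨hu, trivial⟩
        apply le_antisymm _ (zero_le)
        calc μw ((cell w.1 ×ˢ cell w.2 : Set (S × S))ᶜ)
            ≤ μw (((cell w.1)ᶜ ×ˢ (Set.univ : Set S)) ∪
                ((Set.univ : Set S) ×ˢ (cell w.2)ᶜ)) := measure_mono hsub
        _ ≤ μw ((cell w.1)ᶜ ×ˢ (Set.univ : Set S)) +
              μw ((Set.univ : Set S) ×ˢ (cell w.2)ᶜ) := measure_union_le _ _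
        _ = 0 := by
              rw [hμwdef, Measure.prod_prod, Measure.prod_prod, hρc, hσc]
              simp
      have hsplit : (∫⁻ q, edist q.1 q.2 ^ (2:ℕ) ∂μw) =
          ∫⁻ q in (cell w.1 ×ˢ cell w.2 : Set (S × S)), edist q.1 q.2 ^ (2:ℕ) ∂μw := by
        rw [← lintegral_add_compl (fun q : S × S => edist q.1 q.2 ^ (2:ℕ)) (hKwmeas w)]
        rw [setLIntegral_measure_zero _ _ hnull, add_zero]
      rw [hsplit]
      calc (∫⁻ q in (cell w.1 ×ˢ cell w.2 : Set (S × S)), edist q.1 q.2 ^ (2:ℕ) ∂μw)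
          ≤ ∫⁻ _ in (cell w.1 ×ˢ cell w.2 : Set (S × S)),
              (edist (x w.1) (x w.2) + 2 * ε) ^ (2:ℕ) ∂μw := by
            apply setLIntegral_mono measurable_const
            rintro ⟨u, v⟩ huv
            apply sq_mono
            calc edist u v ≤ edist u (x w.1) + edist (x w.1) v := edist_triangle _ _ _
            _ ≤ edist u (x w.1) + (edist (x w.1) (x w.2) + edist (x w.2) v) :=
                add_le_add_right (edist_triangle _ _ _) _
            _ ≤ ε + (edist (x w.1) (x w.2) + ε) := by
                apply add_le_add
                · exact hcelldiam w.1 u huv.1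
                · apply add_le_add_right
                  rw [edist_comm]
                  exact hcelldiam w.2 v huv.2
            _ = edist (x w.1) (x w.2) + 2 * ε := by ring
      _ = (edist (x w.1) (x w.2) + 2 * ε) ^ (2:ℕ) *
            μw (cell w.1 ×ˢ cell w.2 : Set (S × S)) := setLIntegral_const _ _
      _ ≤ (edist (x w.1) (x w.2) + 2 * ε) ^ (2:ℕ) * 1 := by
            apply mul_le_mul_right
            calc μw (cell w.1 ×ˢ cell w.2 : Set (S × S)) ≤ μw Set.univ :=
                  measure_mono (Set.subset_univ _)
            _ = (κ w.1 p) Set.univ * (κ' w.2 p) Set.univ := by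
                  rw [hμwdef, ← Set.univ_prod_univ, Measure.prod_prod]
            _ ≤ 1 * 1 := mul_le_mul' (by rw [hκapp]; exact hnorm_le_one _ _ (hcellmeas w.1))
                  (by rw [hκ'app]; exact hnorm_le_one _ _ (hcellmeas w.2))
            _ = 1 := one_mul 1
      _ = (edist (x w.1) (x w.2) + 2 * ε) ^ (2:ℕ) := mul_one _
    -- step 3 : counting-measure Minkowski
    set μc : Measure (ℕ × ℕ) := Measure.count.withDensity Ep with hμcdef
    have hμcint : ∀ h : ℕ × ℕ → ℝ≥0∞, (∫⁻ w, h w ∂μc) = ∑' w : ℕ × ℕ, Ep w * h w := by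
      intro h
      rw [hμcdef, lintegral_withDensity_eq_lintegral_mul _ (measurable_of_countable Ep)
        (measurable_of_countable h), lintegral_count]
      rfl
    haveI hμcprob : IsProbabilityMeasure μc := by
      constructor
      have h1 : μc Set.univ = ∫⁻ w, (1:ℝ≥0∞) ∂μc := by rw [lintegral_one]
      rw [h1, hμcint]
      simp only [mul_one]
      exact hEpsum
    have hmink : (∑' w : ℕ × ℕ, Ep w * (edist (x w.1) (x w.2) + 2 * ε) ^ (2:ℕ)) ≤
        (SR dE + 2 * ε) ^ (2:ℕ) := by
      have h1 := lintegral_sq_add_const_le μc (fun w : ℕ × ℕ => edist (x w.1) (x w.2))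
        (measurable_of_countable _) (2 * ε)
      rw [hμcint] at h1
      have h2 : (∫⁻ w, (fun w : ℕ × ℕ => edist (x w.1) (x w.2)) w ^ (2:ℕ) ∂μc) = dE := by
        rw [hμcint, hdEdef]
      rw [h2] at h1
      exact h1
    -- step 4 : selector bound
    have hsel : dE ≤ (∑' w : ℕ × ℕ, G p w * edist (x w.1) (x w.2) ^ (2:ℕ)) + ε' :=
      (hEspec' p).2.2 (G p) (hGrow p) (hGcol p) (hmomc p) (hmomd p)
    -- step 5 : compare the cell matrix cost with the coupling cost
    have hGcost : (∑' w : ℕ × ℕ, G p w * edist (x w.1) (x w.2) ^ (2:ℕ)) ≤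
        ∫⁻ q, (edist q.1 q.2 + 2 * ε) ^ (2:ℕ) ∂(γp p) := by
      have hmeasg : Measurable fun q : S × S => (edist q.1 q.2 + 2 * ε) ^ (2:ℕ) :=
        (measurable_edist.add measurable_const).pow measurable_const
      have hterm : ∀ w : ℕ × ℕ, G p w * edist (x w.1) (x w.2) ^ (2:ℕ) ≤
          ∫⁻ q in (cell w.1 ×ˢ cell w.2 : Set (S × S)),
            (edist q.1 q.2 + 2 * ε) ^ (2:ℕ) ∂(γp p) := by
        intro w
        calc G p w * edist (x w.1) (x w.2) ^ (2:ℕ)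
            = edist (x w.1) (x w.2) ^ (2:ℕ) * γp p (cell w.1 ×ˢ cell w.2 : Set (S × S)) := by
              rw [hGdef]; ring
        _ = ∫⁻ _ in (cell w.1 ×ˢ cell w.2 : Set (S × S)),
              edist (x w.1) (x w.2) ^ (2:ℕ) ∂(γp p) := (setLIntegral_const _ _).symm
        _ ≤ ∫⁻ q in (cell w.1 ×ˢ cell w.2 : Set (S × S)),
              (edist q.1 q.2 + 2 * ε) ^ (2:ℕ) ∂(γp p) := by
              apply setLIntegral_mono hmeasg
              rintro ⟨u, v⟩ huv
              apply sq_mono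
              calc edist (x w.1) (x w.2) ≤ edist (x w.1) u + edist u (x w.2) :=
                    edist_triangle _ _ _
              _ ≤ edist (x w.1) u + (edist u v + edist v (x w.2)) :=
                    add_le_add_right (edist_triangle _ _ _) _
              _ ≤ ε + (edist u v + ε) := by
                    apply add_le_add
                    · rw [edist_comm]; exact hcelldiam w.1 u huv.1
                    · exact add_le_add_right (hcelldiam w.2 v huv.2) _
              _ = edist u v + 2 * ε := by ring
      calc (∑' w : ℕ × ℕ, G p w * edist (x w.1) (x w.2) ^ (2:ℕ))
          ≤ ∑' w : ℕ × ℕ, ∫⁻ q in (cell w.1 ×ˢ cell w.2 : Set (S × S)),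
              (edist q.1 q.2 + 2 * ε) ^ (2:ℕ) ∂(γp p) :=
            Summable.tsum_le_tsum hterm ENNReal.summable ENNReal.summable
      _ = ∫⁻ q in ⋃ w : ℕ × ℕ, (cell w.1 ×ˢ cell w.2 : Set (S × S)),
              (edist q.1 q.2 + 2 * ε) ^ (2:ℕ) ∂(γp p) :=
            (lintegral_iUnion hKwmeas hKwdisj _).symm
      _ = ∫⁻ q, (edist q.1 q.2 + 2 * ε) ^ (2:ℕ) ∂(γp p) := by
            rw [hKwunion, Measure.restrict_univ]
    -- step 6 : Minkowski on the coupling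
    haveI := hγprob p
    have hγmink : (∫⁻ q, (edist q.1 q.2 + 2 * ε) ^ (2:ℕ) ∂(γp p)) ≤
        (SR (∫⁻ q, edist q.1 q.2 ^ (2:ℕ) ∂(γp p)) + 2 * ε) ^ (2:ℕ) :=
      lintegral_sq_add_const_le (γp p) (fun q : S × S => edist q.1 q.2)
        measurable_edist (2 * ε)
    -- step 7 : Lipschitz bound on the coupling cost
    have hγbound : SR (∫⁻ q, edist q.1 q.2 ^ (2:ℕ) ∂(γp p)) ≤
        (LS : ℝ≥0∞) * Δ + (LA : ℝ≥0∞) * edist p.1 p.2 + SR σ := by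
      calc SR (∫⁻ q, edist q.1 q.2 ^ (2:ℕ) ∂(γp p))
          ≤ SR (((LS : ℝ≥0∞) * Δ + (LA : ℝ≥0∞) * edist p.1 p.2) ^ (2:ℕ) + σ) :=
            SR_mono (hγ3 p).le
      _ ≤ SR (((LS : ℝ≥0∞) * Δ + (LA : ℝ≥0∞) * edist p.1 p.2) ^ (2:ℕ)) + SR σ :=
            SR_add_le _ _
      _ = (LS : ℝ≥0∞) * Δ + (LA : ℝ≥0∞) * edist p.1 p.2 + SR σ := by rw [SR_sq]
    -- combine everything
    have hdEbound : SR dE + 2 * ε ≤ B₁ + (LA : ℝ≥0∞) * edist p.1 p.2 := by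
      have h1 : SR dE ≤ SR ((∑' w : ℕ × ℕ, G p w * edist (x w.1) (x w.2) ^ (2:ℕ)) + ε') :=
        SR_mono hsel
      have h2 : SR ((∑' w : ℕ × ℕ, G p w * edist (x w.1) (x w.2) ^ (2:ℕ)) + ε') ≤
          SR (∑' w : ℕ × ℕ, G p w * edist (x w.1) (x w.2) ^ (2:ℕ)) + SR ε' := SR_add_le _ _
      have h3 : SR (∑' w : ℕ × ℕ, G p w * edist (x w.1) (x w.2) ^ (2:ℕ)) ≤
          (LS : ℝ≥0∞) * Δ + (LA : ℝ≥0∞) * edist p.1 p.2 + SR σ + 2 * ε := by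
        calc SR (∑' w : ℕ × ℕ, G p w * edist (x w.1) (x w.2) ^ (2:ℕ))
            ≤ SR ((SR (∫⁻ q, edist q.1 q.2 ^ (2:ℕ) ∂(γp p)) + 2 * ε) ^ (2:ℕ)) :=
              SR_mono (hGcost.trans hγmink)
        _ = SR (∫⁻ q, edist q.1 q.2 ^ (2:ℕ) ∂(γp p)) + 2 * ε := SR_sq _
        _ ≤ (LS : ℝ≥0∞) * Δ + (LA : ℝ≥0∞) * edist p.1 p.2 + SR σ + 2 * ε :=
              add_le_add_left hγbound _
      calc SR dE + 2 * ε
          ≤ (((LS : ℝ≥0∞) * Δ + (LA : ℝ≥0∞) * edist p.1 p.2 + SR σ + 2 * ε) + SR ε')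
              + 2 * ε := by
            apply add_le_add_left
            exact h1.trans (h2.trans (add_le_add_left h3 _))
      _ = B₁ + (LA : ℝ≥0∞) * edist p.1 p.2 := by rw [hB₁def]; ring
    calc (∫⁻ q, edist q.1 q.2 ^ (2:ℕ) ∂(Φ p))
        = ∑' w : ℕ × ℕ, Ep w * ∫⁻ q, edist q.1 q.2 ^ (2:ℕ) ∂((κ w.1 ×ₖ κ' w.2) p) :=
          hsum_cost
    _ ≤ ∑' w : ℕ × ℕ, Ep w * (edist (x w.1) (x w.2) + 2 * ε) ^ (2:ℕ) :=
          Summable.tsum_le_tsum (fun w => mul_le_mul_right (hprod_cost w) _)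
            ENNReal.summable ENNReal.summable
    _ ≤ (SR dE + 2 * ε) ^ (2:ℕ) := hmink
    _ ≤ (B₁ + (LA : ℝ≥0∞) * edist p.1 p.2) ^ (2:ℕ) := sq_mono hdEbound
  -- conclusion
  have hcostΞ : (∫⁻ q, edist q.1 q.2 ^ (2:ℕ) ∂Ξ) ≤
      ((LA : ℝ≥0∞) * ((Kπ : ℝ≥0∞) * Δ + SR σ₂) + B₁) ^ (2:ℕ) := by
    have h1 : (∫⁻ q, edist q.1 q.2 ^ (2:ℕ) ∂Ξ) =
        ∫⁻ p, (∫⁻ q, edist q.1 q.2 ^ (2:ℕ) ∂(Φ p)) ∂η := by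
      rw [hΞdef]
      exact Measure.lintegral_bind hΦmeas.aemeasurable hCmeas.aemeasurable
    have hdmeas : Measurable fun p : A × A => (LA : ℝ≥0∞) * edist p.1 p.2 :=
      measurable_edist.const_mul _
    have h2 : (∫⁻ p, ((fun p : A × A => (LA : ℝ≥0∞) * edist p.1 p.2) p + B₁) ^ (2:ℕ) ∂η) ≤
        (SR (∫⁻ p, ((LA : ℝ≥0∞) * edist p.1 p.2) ^ (2:ℕ) ∂η) + B₁) ^ (2:ℕ) :=
      lintegral_sq_add_const_le η _ hdmeas B₁
    have h3 : (∫⁻ p, ((LA : ℝ≥0∞) * edist p.1 p.2) ^ (2:ℕ) ∂η) =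
        (LA : ℝ≥0∞) ^ (2:ℕ) * ∫⁻ p, edist p.1 p.2 ^ (2:ℕ) ∂η := by
      rw [← lintegral_const_mul _ (measurable_edist.pow measurable_const)]
      congr 1; funext p; rw [mul_pow]
    have h4 : SR (∫⁻ p, ((LA : ℝ≥0∞) * edist p.1 p.2) ^ (2:ℕ) ∂η) ≤
        (LA : ℝ≥0∞) * ((Kπ : ℝ≥0∞) * Δ + SR σ₂) := by
      rw [h3]
      calc SR ((LA : ℝ≥0∞) ^ (2:ℕ) * ∫⁻ p, edist p.1 p.2 ^ (2:ℕ) ∂η)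
          = SR ((LA : ℝ≥0∞) ^ (2:ℕ)) * SR (∫⁻ p, edist p.1 p.2 ^ (2:ℕ) ∂η) := by
            rw [SR, SR, SR, ENNReal.mul_rpow_of_nonneg _ _ (by norm_num : (0:ℝ) ≤ 1/2)]
      _ = (LA : ℝ≥0∞) * SR (∫⁻ p, edist p.1 p.2 ^ (2:ℕ) ∂η) := by rw [SR_sq]
      _ ≤ (LA : ℝ≥0∞) * ((Kπ : ℝ≥0∞) * Δ + SR σ₂) := by
            apply mul_le_mul_right
            calc SR (∫⁻ p, edist p.1 p.2 ^ (2:ℕ) ∂η)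
                ≤ SR (((Kπ : ℝ≥0∞) * Δ) ^ (2:ℕ) + σ₂) := SR_mono hη3.le
            _ ≤ SR (((Kπ : ℝ≥0∞) * Δ) ^ (2:ℕ)) + SR σ₂ := SR_add_le _ _
            _ = (Kπ : ℝ≥0∞) * Δ + SR σ₂ := by rw [SR_sq]
    calc (∫⁻ q, edist q.1 q.2 ^ (2:ℕ) ∂Ξ)
        = ∫⁻ p, (∫⁻ q, edist q.1 q.2 ^ (2:ℕ) ∂(Φ p)) ∂η := h1
    _ ≤ ∫⁻ p, (B₁ + (LA : ℝ≥0∞) * edist p.1 p.2) ^ (2:ℕ) ∂η := lintegral_mono hΦcost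
    _ = ∫⁻ p, ((fun p : A × A => (LA : ℝ≥0∞) * edist p.1 p.2) p + B₁) ^ (2:ℕ) ∂η := by
          congr 1; funext p; rw [add_comm]
    _ ≤ (SR (∫⁻ p, ((LA : ℝ≥0∞) * edist p.1 p.2) ^ (2:ℕ) ∂η) + B₁) ^ (2:ℕ) := h2
    _ ≤ ((LA : ℝ≥0∞) * ((Kπ : ℝ≥0∞) * Δ + SR σ₂) + B₁) ^ (2:ℕ) :=
          sq_mono (add_le_add_left h4 _)
  have hW2fin : W2 ((π s).bind (T s)) ((π s').bind (T s')) ≤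
      (LA : ℝ≥0∞) * ((Kπ : ℝ≥0∞) * Δ + SR σ₂) + B₁ := by
    have hle : W2sq ((π s).bind (T s)) ((π s').bind (T s')) ≤
        ∫⁻ q, edist q.1 q.2 ^ (2:ℕ) ∂Ξ := W2sq_le_cost Ξ hΞfst hΞsnd
    calc W2 ((π s).bind (T s)) ((π s').bind (T s'))
        = SR (W2sq ((π s).bind (T s)) ((π s').bind (T s'))) := W2_eq_SR _ _
    _ ≤ SR (((LA : ℝ≥0∞) * ((Kπ : ℝ≥0∞) * Δ + SR σ₂) + B₁) ^ (2:ℕ)) :=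
          SR_mono (hle.trans hcostΞ)
    _ = (LA : ℝ≥0∞) * ((Kπ : ℝ≥0∞) * Δ + SR σ₂) + B₁ := SR_sq _
  refine hW2fin.trans ?_
  have hSRσ : SR σ = θ4 := by rw [hσdef, SR_sq]
  have hSRε' : SR ε' = θ4 := by rw [hε'def, SR_sq]
  have hSRσ₂ : SR σ₂ = θ4 * ((LA : ℝ≥0∞) + 1)⁻¹ := by rw [hσ₂def, SR_sq]
  have h4ε : 4 * ε ≤ θ4 := by
    rw [hεdef, div_eq_mul_inv]
    calc (4:ℝ≥0∞) * (θ4 * 4⁻¹) = θ4 * (4⁻¹ * 4) := by ring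
    _ ≤ θ4 * 1 := mul_le_mul_right (ENNReal.inv_mul_le_one _) _
    _ = θ4 := mul_one _
  have hLAσ₂ : (LA : ℝ≥0∞) * SR σ₂ ≤ θ4 := by
    rw [hSRσ₂]
    calc (LA : ℝ≥0∞) * (θ4 * ((LA : ℝ≥0∞) + 1)⁻¹)
        = θ4 * ((LA : ℝ≥0∞) * ((LA : ℝ≥0∞) + 1)⁻¹) := by ring
    _ ≤ θ4 * (((LA : ℝ≥0∞) + 1) * ((LA : ℝ≥0∞) + 1)⁻¹) := by
        apply mul_le_mul_right
        exact mul_le_mul_left le_self_add _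
    _ ≤ θ4 * 1 := mul_le_mul_right (ENNReal.mul_inv_le_one _) _
    _ = θ4 := mul_one _
  have h4θ4 : θ4 + θ4 + θ4 + θ4 ≤ (θ : ℝ≥0∞) := by
    rw [hθ4def, div_eq_mul_inv]
    calc (θ : ℝ≥0∞) * 4⁻¹ + (θ : ℝ≥0∞) * 4⁻¹ + (θ : ℝ≥0∞) * 4⁻¹ + (θ : ℝ≥0∞) * 4⁻¹
        = (θ : ℝ≥0∞) * (4⁻¹ * 4) := by ring
    _ ≤ (θ : ℝ≥0∞) * 1 := mul_le_mul_right (ENNReal.inv_mul_le_one _) _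
    _ = (θ : ℝ≥0∞) := mul_one _
  calc (LA : ℝ≥0∞) * ((Kπ : ℝ≥0∞) * Δ + SR σ₂) + B₁
      = ((LS : ℝ≥0∞) * Δ + (LA : ℝ≥0∞) * ((Kπ : ℝ≥0∞) * Δ)) +
          ((LA : ℝ≥0∞) * SR σ₂ + SR σ + 4 * ε + SR ε') := by rw [hB₁def]; ring
  _ ≤ ((LS : ℝ≥0∞) * Δ + (LA : ℝ≥0∞) * ((Kπ : ℝ≥0∞) * Δ)) + (θ4 + θ4 + θ4 + θ4) := by
        apply add_le_add_right
        exact add_le_add (add_le_add (add_le_add hLAσ₂ (le_of_eq hSRσ)) h4ε)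
          (le_of_eq hSRε')
  _ ≤ ((LS : ℝ≥0∞) * Δ + (LA : ℝ≥0∞) * ((Kπ : ℝ≥0∞) * Δ)) + (θ : ℝ≥0∞) :=
        add_le_add_right h4θ4 _
  _ = ((LS : ℝ≥0∞) + (LA : ℝ≥0∞) * (Kπ : ℝ≥0∞)) * Δ + (θ : ℝ≥0∞) := by ring

end Main

end
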